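/- arXiv:2105.13322 — 5 statements merged into one kernel-verified Lean document; each statement's English description precedes it below -/
import Mathlib

section
/- Let G be a finite group that is not a cyclic group of prime power order, and suppose κ(P(G)) = δ(P(G)). If x ∈ G satisfies deg(x) = δ(P(G)) in P(G), then x has order 2; in particular G has even order. -/
/-- The power graph of a group: distinct `x` and `y` are adjacent iff one is a
positive power of the other. -/
def powerGraph (G : Type*) [Group G] : SimpleGraph G where
  Adj x y := x ≠ y ∧ ((∃ k : ℕ, 0 < k ∧ x = y ^ k) ∨ (∃ k : ℕ, 0 < k ∧ y = x ^ k))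
  symm := by
    constructor
    intro x y h
    exact ⟨h.1.symm, h.2.symm⟩
  loopless := by
    constructor
    intro x h
    exact h.1 rfl

noncomputable instance powerGraphDecidableAdj (G : Type*) [Group G] :
    DecidableRel (powerGraph G).Adj :=
  Classical.decRel _

/-- The vertex connectivity of a finite graph: the minimum number of vertices whose
deletion yields a disconnected graph or a graph with exactly one vertex. -/
noncomputable def vertexConnectivity {V : Type*} [Fintype V] (Γ : SimpleGraph V) : ℕ :=
  sInf {n | ∃ S : Finset V, S.card = n ∧
    (¬ (SimpleGraph.induce ((↑S : Set V)ᶜ) Γ).Preconnected ∨ ((↑S : Set V)ᶜ).ncard = 1)}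

/-- A subgroup is a maximal cyclic subgroup if it is cyclic and not properly contained
in any cyclic subgroup. -/
def IsMaximalCyclic {G : Type*} [Group G] (M : Subgroup G) : Prop :=
  IsCyclic ↥M ∧ ∀ N : Subgroup G, IsCyclic ↥N → M ≤ N → M = N

/-- `K` is a maximal cyclic subgroup of the subgroup `H`. -/
def IsMaximalCyclicIn {G : Type*} [Group G] (H K : Subgroup G) : Prop :=
  IsCyclic ↥K ∧ K ≤ H ∧ ∀ N : Subgroup G, IsCyclic ↥N → N ≤ H → K ≤ N → K = N

/-- A generalized quaternion group: a dicyclic group `Q_{4n}` with `n ≥ 2` a power of 2. -/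
def IsGeneralizedQuaternion (G : Type*) [Group G] : Prop :=
  ∃ n : ℕ, 2 ≤ n ∧ (∃ k : ℕ, n = 2 ^ k) ∧ Nonempty (G ≃* QuaternionGroup n)

section Aux

variable {G : Type*} [Group G] [Fintype G]

lemma pg_inv_eq_pow (y : G) : y⁻¹ = y ^ (orderOf y - 1) := by
  have h : 0 < orderOf y := orderOf_pos y
  have hy : y ^ (orderOf y - 1) * y = 1 := by
    rw [← pow_succ, Nat.sub_add_cancel h, pow_orderOf_eq_one]
  exact (eq_inv_of_mul_eq_one_left hy).symm

lemma pg_adj_one {x : G} (hx : x ≠ 1) : (powerGraph G).Adj x 1 :=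
  ⟨hx, Or.inr ⟨orderOf x, orderOf_pos x, (pow_orderOf_eq_one x).symm⟩⟩

lemma pg_adj_inv {x : G} (h3 : 3 ≤ orderOf x) : (powerGraph G).Adj x x⁻¹ := by
  refine ⟨?_, Or.inr ⟨orderOf x - 1, by omega, pg_inv_eq_pow x⟩⟩
  intro h
  have h2 : x ^ 2 = 1 := by rw [pow_two]; nth_rewrite 2 [h]; exact mul_inv_cancel x
  have := Nat.le_of_dvd (by norm_num) (orderOf_dvd_of_pow_eq_one h2)
  omega

lemma pg_two_le_orderOf {w : G} (hw : w ≠ 1) : 2 ≤ orderOf w := by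
  have h1 := orderOf_pos w
  have h2 : orderOf w ≠ 1 := fun h => hw (orderOf_eq_one_iff.mp h)
  omega

lemma pg_adj_of_inv_adj {x w : G} (h3 : 3 ≤ orderOf x)
    (h : (powerGraph G).Adj x⁻¹ w) (hw : w ≠ x) : (powerGraph G).Adj x w := by
  obtain ⟨hne, hc⟩ := h
  refine ⟨Ne.symm hw, ?_⟩
  have hx1 : x ≠ 1 := by
    intro h; rw [h, orderOf_one] at h3; omega
  rcases hc with ⟨k, hk, hxk⟩ | ⟨k, hk, hwk⟩
  · have hw1 : w ≠ 1 := by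
      rintro rfl
      exact hx1 (by rw [← inv_inv x, hxk, one_pow, inv_one])
    left
    refine ⟨(orderOf w - 1) * k, Nat.mul_pos (by have := pg_two_le_orderOf hw1; omega) hk, ?_⟩
    calc x = (x⁻¹)⁻¹ := (inv_inv x).symm
      _ = (w ^ k)⁻¹ := by rw [hxk]
      _ = (w⁻¹) ^ k := (inv_pow w k).symm
      _ = (w ^ (orderOf w - 1)) ^ k := by rw [pg_inv_eq_pow]
      _ = w ^ ((orderOf w - 1) * k) := by rw [← pow_mul]
  · right
    refine ⟨(orderOf x - 1) * k, Nat.mul_pos (by omega) hk, ?_⟩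
    rw [hwk, pg_inv_eq_pow x, ← pow_mul]

lemma pg_walk_mem {V : Type*} {Γ : SimpleGraph V} {T : Set V}
    (hT : ∀ a b, a ∈ T → Γ.Adj a b → b ∈ T) {u v : V} (w : Γ.Walk u v) (hu : u ∈ T) : v ∈ T := by
  induction w with
  | nil => exact hu
  | cons h p ih => exact ih (hT _ _ hu h)

lemma pg_complete (hc : ∀ a b : G, a ≠ b → (powerGraph G).Adj a b) :
    IsCyclic G ∧ ∃ p k : ℕ, p.Prime ∧ Fintype.card G = p ^ k := by
  constructor
  · obtain ⟨g, hg⟩ := Finite.exists_max (fun y : G => orderOf y)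
    refine ⟨g, fun y => ?_⟩
    show y ∈ Subgroup.zpowers g
    by_cases hyg : y = g
    · exact hyg ▸ Subgroup.mem_zpowers g
    · rcases (hc y g hyg).2 with ⟨k, hk, hyk⟩ | ⟨k, hk, hgk⟩
      · exact Subgroup.mem_zpowers_iff.mpr ⟨(k : ℤ), by rw [zpow_natCast, ← hyk]⟩
      · have h1 : orderOf g ∣ orderOf y := hgk ▸ orderOf_pow_dvd k
        have h2 : orderOf y = orderOf g := le_antisymm (hg y) (Nat.le_of_dvd (orderOf_pos y) h1)
        have hle : Subgroup.zpowers g ≤ Subgroup.zpowers y :=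
          Subgroup.zpowers_le.mpr (Subgroup.mem_zpowers_iff.mpr ⟨(k : ℤ), by rw [zpow_natCast, ← hgk]⟩)
        have heq : Subgroup.zpowers g = Subgroup.zpowers y :=
          Subgroup.eq_of_le_of_card_ge hle (by rw [Nat.card_zpowers, Nat.card_zpowers, h2])
        rw [heq]
        exact Subgroup.mem_zpowers y
  · by_cases h1 : Fintype.card G = 1
    · exact ⟨2, 0, Nat.prime_two, by simp [h1]⟩
    · have hpp : (Fintype.card G).minFac.Prime := Nat.minFac_prime h1
      by_cases hall : ∀ q : ℕ, q.Prime → q ∣ Fintype.card G → q = (Fintype.card G).minFac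
      · exact ⟨_, _, hpp,
          Nat.eq_prime_pow_of_unique_prime_dvd Fintype.card_ne_zero fun hq hd => hall _ hq hd⟩
      · exfalso
        push_neg at hall
        obtain ⟨q, hq, hqd, hqp⟩ := hall
        haveI := Fact.mk hpp
        haveI := Fact.mk hq
        obtain ⟨a, ha⟩ := exists_prime_orderOf_dvd_card (Fintype.card G).minFac (Nat.minFac_dvd _)
        obtain ⟨b, hb⟩ := exists_prime_orderOf_dvd_card q hqd
        have hab : a ≠ b := fun h => hqp (by rw [← hb, ← h, ha])
        rcases (hc a b hab).2 with ⟨k, hk, h⟩ | ⟨k, hk, h⟩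
        · have hd : orderOf a ∣ orderOf b := h ▸ orderOf_pow_dvd k
          rw [ha, hb] at hd
          exact hqp ((Nat.prime_dvd_prime_iff_eq hpp hq).1 hd).symm
        · have hd : orderOf b ∣ orderOf a := h ▸ orderOf_pow_dvd k
          rw [ha, hb] at hd
          exact hqp ((Nat.prime_dvd_prime_iff_eq hq hpp).1 hd)

end Aux

theorem min_degree_vertex_has_order_two
    {G : Type*} [Group G] [Fintype G]
    (hG : ¬ (IsCyclic G ∧ ∃ p k : ℕ, p.Prime ∧ Fintype.card G = p ^ k))
    (heq : vertexConnectivity (powerGraph G) = (powerGraph G).minDegree)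
    (x : G) (hx : (powerGraph G).degree x = (powerGraph G).minDegree) :
    orderOf x = 2 ∧ 2 ∣ Fintype.card G := by
  classical
  by_cases hcomp : ∀ z : G, z ≠ x → (powerGraph G).Adj x z
  · exfalso
    apply hG
    have hxdeg : (powerGraph G).degree x = Fintype.card G - 1 := by
      have hNx : (powerGraph G).neighborFinset x = Finset.univ.erase x := by
        ext w
        rw [SimpleGraph.mem_neighborFinset, Finset.mem_erase]
        constructor
        · intro h; exact ⟨(h.ne).symm, Finset.mem_univ w⟩
        · intro h; exact hcomp w h.1
      rw [SimpleGraph.degree, hNx, Finset.card_erase_of_mem (Finset.mem_univ x),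
        Finset.card_univ]
    apply pg_complete
    intro a b hab
    have h1 : (powerGraph G).degree a = Fintype.card G - 1 := by
      have hub : (powerGraph G).degree a ≤ Fintype.card G - 1 :=
        Nat.le_sub_one_of_lt ((powerGraph G).degree_lt_card_verts a)
      have hlb : Fintype.card G - 1 ≤ (powerGraph G).degree a := by
        rw [← hxdeg, hx]
        exact (powerGraph G).minDegree_le_degree a
      omega
    have hsub : (powerGraph G).neighborFinset a ⊆ Finset.univ.erase a := by
      intro w hw
      rw [Finset.mem_erase]
      exact ⟨((SimpleGraph.mem_neighborFinset _ _ _).mp hw).ne.symm, Finset.mem_univ w⟩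
    have hNa : (powerGraph G).neighborFinset a = Finset.univ.erase a := by
      apply Finset.eq_of_subset_of_card_le hsub
      rw [Finset.card_erase_of_mem (Finset.mem_univ a), Finset.card_univ]
      exact le_of_eq h1.symm
    have hb : b ∈ (powerGraph G).neighborFinset a := by
      rw [hNa, Finset.mem_erase]
      exact ⟨hab.symm, Finset.mem_univ b⟩
    exact (SimpleGraph.mem_neighborFinset _ _ _).mp hb
  · push_neg at hcomp
    obtain ⟨z, hzx, hzadj⟩ := hcomp
    have hx1 : x ≠ 1 := by
      rintro rfl
      exact hzadj ⟨hzx.symm, Or.inl ⟨orderOf z, orderOf_pos z, (pow_orderOf_eq_one z).symm⟩⟩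
    have hord2 : orderOf x = 2 := by
      by_contra hne2
      have h3 : 3 ≤ orderOf x := by
        have := pg_two_le_orderOf hx1
        omega
      set S : Finset G := (powerGraph G).neighborFinset x \ {x⁻¹} with hS
      have hxinv : x⁻¹ ∈ (powerGraph G).neighborFinset x :=
        (SimpleGraph.mem_neighborFinset _ _ _).mpr (pg_adj_inv h3)
      have hcard : S.card = (powerGraph G).degree x - 1 := by
        rw [hS, Finset.card_sdiff_of_subset (Finset.singleton_subset_iff.mpr hxinv),
          Finset.card_singleton, SimpleGraph.degree]
      have hxS : x ∈ ((↑S : Set G)ᶜ) := by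
        simp only [Set.mem_compl_iff, Finset.coe_sdiff, Set.mem_diff, not_and,
          Finset.mem_coe, hS]
        intro hmem
        exact absurd hmem ((powerGraph G).notMem_neighborFinset_self x)
      have hzS : z ∈ ((↑S : Set G)ᶜ) := by
        simp only [Set.mem_compl_iff, Finset.mem_coe, hS, Finset.mem_sdiff]
        intro hmem
        exact hzadj ((SimpleGraph.mem_neighborFinset _ _ _).mp hmem.1)
      have hzinv : z ≠ x⁻¹ := by
        rintro rfl
        exact hzadj (pg_adj_inv h3)
      have hmem : ((powerGraph G).degree x - 1) ∈
          {n | ∃ S : Finset G, S.card = n ∧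
            (¬ (SimpleGraph.induce ((↑S : Set G)ᶜ) (powerGraph G)).Preconnected ∨
              ((↑S : Set G)ᶜ).ncard = 1)} := by
        refine ⟨S, hcard, Or.inl ?_⟩
        intro hpre
        obtain ⟨w⟩ := hpre ⟨x, hxS⟩ ⟨z, hzS⟩
        have hclosed : ∀ a b : ((↑S : Set G)ᶜ : Set G),
            a ∈ {a : ((↑S : Set G)ᶜ : Set G) | a.val = x ∨ a.val = x⁻¹} →
            (SimpleGraph.induce ((↑S : Set G)ᶜ) (powerGraph G)).Adj a b →
            b ∈ {a : ((↑S : Set G)ᶜ : Set G) | a.val = x ∨ a.val = x⁻¹} := by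
          rintro ⟨a, haS⟩ ⟨b, hbS⟩ ha hadj
          have hadj' : (powerGraph G).Adj a b := hadj
          have hbnS : b ∉ S := hbS
          rcases ha with ha | ha
          · have ha' : a = x := ha
            rw [ha'] at hadj'
            right
            have hbN : b ∈ (powerGraph G).neighborFinset x :=
              (SimpleGraph.mem_neighborFinset _ _ _).mpr hadj'
            rw [hS, Finset.mem_sdiff] at hbnS
            push_neg at hbnS
            exact Finset.mem_singleton.mp (hbnS hbN)
          · by_cases hbx : b = x
            · exact Or.inl hbx
            · right
              have hadj2 : (powerGraph G).Adj x b := pg_adj_of_inv_adj h3 (by have ha' : a = x⁻¹ := ha; rw [← ha']; exact hadj') hbx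
              have hbN : b ∈ (powerGraph G).neighborFinset x :=
                (SimpleGraph.mem_neighborFinset _ _ _).mpr hadj2
              rw [hS, Finset.mem_sdiff] at hbnS
              push_neg at hbnS
              exact Finset.mem_singleton.mp (hbnS hbN)
        have hstay := pg_walk_mem hclosed w (Or.inl rfl)
        rcases hstay with h | h
        · exact hzx h
        · exact hzinv h
      have hle : vertexConnectivity (powerGraph G) ≤ (powerGraph G).degree x - 1 :=
        Nat.sInf_le hmem
      have hdpos : 1 ≤ (powerGraph G).degree x := by
        have h1N : (1 : G) ∈ (powerGraph G).neighborFinset x :=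
          (SimpleGraph.mem_neighborFinset _ _ _).mpr (pg_adj_one hx1)
        exact Finset.card_pos.mpr ⟨1, h1N⟩
      omega
    exact ⟨hord2, hord2 ▸ orderOf_dvd_card⟩
end

section
/- Let G be a finite cyclic group. Then κ(P(G)) = δ(P(G)) if and only if |G| is a prime power or twice a prime power. -/
namespace PGAux

open Finset

variable {G : Type*} [Group G] [Fintype G]

lemma pg_exists_pow_iff (x y : G) : (∃ k : ℕ, 0 < k ∧ x = y ^ k) ↔ x ∈ Subgroup.zpowers y := by
  constructor
  · rintro ⟨k, -, rfl⟩; exact zpow_natCast y k ▸ Subgroup.zpow_mem _ (Subgroup.mem_zpowers y) k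
  · intro h
    obtain ⟨k, hk⟩ := (Submonoid.mem_powers_iff _ _).1 (mem_powers_iff_mem_zpowers.2 h)
    rcases Nat.eq_zero_or_pos k with rfl | hpos
    · exact ⟨orderOf y, orderOf_pos y, by rw [pow_orderOf_eq_one, ← hk, pow_zero]⟩
    · exact ⟨k, hpos, hk.symm⟩

lemma mem_zpowers_iff_orderOf_dvd (hG : IsCyclic G) (x y : G) :
    x ∈ Subgroup.zpowers y ↔ orderOf x ∣ orderOf y := by
  classical
  constructor
  · rintro h
    obtain ⟨k, rfl⟩ := (Submonoid.mem_powers_iff _ _).1 (mem_powers_iff_mem_zpowers.2 h)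
    exact orderOf_pow_dvd k
  · intro h
    have hle := hG.card_pow_eq_one_le (n := orderOf y) (orderOf_pos y)
    have hsub : ((Subgroup.zpowers y : Set G).toFinset : Finset G)
        ⊆ ({a : G | a ^ orderOf y = 1} : Finset G) := by
      intro a ha
      rw [Set.mem_toFinset] at ha
      obtain ⟨k, rfl⟩ := (Submonoid.mem_powers_iff _ _).1 (mem_powers_iff_mem_zpowers.2 ha)
      simp only [mem_filter, mem_univ, true_and]
      rw [← pow_mul, mul_comm, pow_mul, pow_orderOf_eq_one, one_pow]
    have hcard : ((Subgroup.zpowers y : Set G).toFinset).card = orderOf y := by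
      simp [Set.toFinset_card, ← Nat.card_eq_fintype_card, Nat.card_zpowers]
    have heq := Finset.eq_of_subset_of_card_le hsub (by rw [hcard]; exact hle)
    have : x ∈ ({a : G | a ^ orderOf y = 1} : Finset G) := by
      simp only [mem_filter, mem_univ, true_and]
      exact orderOf_dvd_iff_pow_eq_one.1 h
    rw [← heq, Set.mem_toFinset] at this
    exact this

lemma pg_adj_iff (hG : IsCyclic G) (x y : G) :
    (powerGraph G).Adj x y ↔ x ≠ y ∧ (orderOf x ∣ orderOf y ∨ orderOf y ∣ orderOf x) := by
  show (x ≠ y ∧ _) ↔ _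
  rw [pg_exists_pow_iff, pg_exists_pow_iff, mem_zpowers_iff_orderOf_dvd hG,
    mem_zpowers_iff_orderOf_dvd hG]

section Counting

variable [DecidableEq G]

lemma card_orderOf_dvd (hG : IsCyclic G) {d : ℕ} (hd : d ∣ Fintype.card G) :
    ({x : G | orderOf x ∣ d} : Finset G).card = d := by
  classical
  have hd0 : d ≠ 0 := by
    rintro rfl
    exact (Fintype.card_pos (α := G)).ne' (Nat.eq_zero_of_zero_dvd hd)
  have : ({x : G | orderOf x ∣ d} : Finset G)
      = d.divisors.biUnion (fun e => ({x : G | orderOf x = e} : Finset G)) := by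
    ext x
    simp only [mem_biUnion, Nat.mem_divisors, mem_filter, mem_univ, true_and, Set.mem_setOf_eq]
    constructor
    · intro h; exact ⟨orderOf x, ⟨h, hd0⟩, rfl⟩
    · rintro ⟨e, ⟨he, -⟩, rfl⟩; exact he
  rw [this, card_biUnion]
  · have : ∀ e ∈ d.divisors, ({x : G | orderOf x = e} : Finset G).card = e.totient := by
      intro e he
      exact hG.card_orderOf_eq_totient ((Nat.mem_divisors.1 he).1.trans hd)
    rw [Finset.sum_congr rfl this, Nat.sum_totient]
  · intro a _ b _ hab
    simp only [disjoint_left, mem_filter]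
    rintro x ⟨-, rfl⟩ ⟨-, rfl⟩
    exact hab rfl

lemma count_not (Q : G → Prop) [DecidablePred Q] :
    ({x : G | ¬ Q x} : Finset G).card = Fintype.card G - ({x : G | Q x} : Finset G).card := by
  have h : ({x : G | ¬ Q x} : Finset G) = ({x : G | Q x} : Finset G)ᶜ := by
    ext x; simp
  rw [h, Finset.card_compl]

lemma count_or (hG : IsCyclic G) {a b : ℕ} (ha : a ∣ Fintype.card G) (hb : b ∣ Fintype.card G) :
    ({x : G | orderOf x ∣ a ∨ orderOf x ∣ b} : Finset G).card = a + b - Nat.gcd a b := by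
  have h1 : ({x : G | orderOf x ∣ a ∨ orderOf x ∣ b} : Finset G)
      = ({x : G | orderOf x ∣ a} : Finset G) ∪ ({x : G | orderOf x ∣ b} : Finset G) := by
    ext x; simp [or_and_right]
  have h2 : ({x : G | orderOf x ∣ a} : Finset G) ∩ ({x : G | orderOf x ∣ b} : Finset G)
      = ({x : G | orderOf x ∣ Nat.gcd a b} : Finset G) := by
    ext x; simp [Nat.dvd_gcd_iff, and_assoc]
  have h3 := Finset.card_union_add_card_inter ({x : G | orderOf x ∣ a} : Finset G)
    ({x : G | orderOf x ∣ b} : Finset G)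
  rw [h2, card_orderOf_dvd hG ha, card_orderOf_dvd hG hb,
    card_orderOf_dvd hG ((Nat.gcd_dvd_left a b).trans ha)] at h3
  rw [h1]
  have ha0 : 0 < a := Nat.pos_of_dvd_of_pos ha Fintype.card_pos
  have : Nat.gcd a b ≤ a := Nat.le_of_dvd ha0 (Nat.gcd_dvd_left a b)
  omega

/-- Splitting the comparable set of a divisor `d`. -/
lemma Dsplit (hG : IsCyclic G) {d : ℕ} (hd : d ∣ Fintype.card G) :
    ({w : G | orderOf w ∣ d ∨ d ∣ orderOf w} : Finset G).card + d.totient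
      = d + ({w : G | d ∣ orderOf w} : Finset G).card := by
  have h1 : ({w : G | orderOf w ∣ d ∨ d ∣ orderOf w} : Finset G)
      = ({w : G | orderOf w ∣ d} : Finset G) ∪ ({w : G | d ∣ orderOf w} : Finset G) := by
    ext w; simp [or_and_right]
  have h2 : ({w : G | orderOf w ∣ d} : Finset G) ∩ ({w : G | d ∣ orderOf w} : Finset G)
      = ({w : G | orderOf w = d} : Finset G) := by
    ext w
    simp only [mem_inter, mem_filter, mem_univ, true_and, Set.mem_setOf_eq]
    exact ⟨fun h => Nat.dvd_antisymm h.1 h.2, fun h => ⟨h ▸ dvd_rfl, h ▸ dvd_rfl⟩⟩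
  have h3 := Finset.card_union_add_card_inter ({w : G | orderOf w ∣ d} : Finset G)
    ({w : G | d ∣ orderOf w} : Finset G)
  rw [h2, card_orderOf_dvd hG hd, hG.card_orderOf_eq_totient hd] at h3
  rw [h1]
  omega

lemma get_two_of_order (hG : IsCyclic G) {d : ℕ} (hd : d ∣ Fintype.card G) (h3 : 2 < d) :
    ∃ x y : G, x ≠ y ∧ orderOf x = d ∧ orderOf y = d := by
  have hcard : ({x : G | orderOf x = d} : Finset G).card = d.totient :=
    hG.card_orderOf_eq_totient hd
  have heven := Nat.totient_even h3
  have hpos : 0 < d.totient := Nat.totient_pos.2 (by omega)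
  have h2 : 1 < ({x : G | orderOf x = d} : Finset G).card := by
    obtain ⟨c, hc⟩ := heven
    omega
  obtain ⟨x, hx, y, hy, hxy⟩ := Finset.one_lt_card.1 h2
  simp only [mem_filter, mem_univ, true_and, Set.mem_setOf_eq] at hx hy
  exact ⟨x, y, hxy, hx, hy⟩

end Counting

lemma reachable_closed {V : Type*} {Γ : SimpleGraph V} {K : Set V}
    (hK : ∀ u v, u ∈ K → Γ.Adj u v → v ∈ K) {a b : V} (h : Γ.Reachable a b) (ha : a ∈ K) :
    b ∈ K := by
  obtain ⟨w⟩ := h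
  induction w with
  | nil => exact ha
  | cons h' p ih => exact ih (hK _ _ ha h')

lemma ncard_compl_coe {V : Type*} [Fintype V] (S : Finset V) :
    ((↑S : Set V)ᶜ).ncard = Fintype.card V - S.card := by
  classical
  rw [Set.ncard_eq_toFinset_card', Set.toFinset_compl, Finset.toFinset_coe, Finset.card_compl]

lemma vc_le_minDegree {V : Type*} [Fintype V] (Γ : SimpleGraph V) [DecidableRel Γ.Adj]
    [Nonempty V] : vertexConnectivity Γ ≤ Γ.minDegree := by
  classical
  obtain ⟨v, hv⟩ := Γ.exists_minimal_degree_vertex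
  apply Nat.sInf_le
  refine ⟨Γ.neighborFinset v, by rw [hv]; rfl, ?_⟩
  have hvmem : v ∈ ((↑(Γ.neighborFinset v) : Set V)ᶜ) := by
    simp
  by_cases hone : ((↑(Γ.neighborFinset v) : Set V)ᶜ) = {v}
  · right; rw [hone]; simp
  · left
    intro hpre
    have : ∃ w, w ∈ ((↑(Γ.neighborFinset v) : Set V)ᶜ) ∧ w ≠ v := by
      by_contra hc
      push_neg at hc
      exact hone (Set.eq_singleton_iff_unique_mem.2 ⟨hvmem, fun w hw => hc w hw⟩)
    obtain ⟨w, hw, hwv⟩ := this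
    have hreach := hpre ⟨v, hvmem⟩ ⟨w, hw⟩
    obtain ⟨p⟩ := hreach
    cases p with
    | nil => exact hwv rfl
    | @cons _ u _ h p =>
      have : Γ.Adj v u.1 := h
      exact u.2 (by simpa using this)

lemma vc_eq_of_complete {V : Type*} [Fintype V] [Nonempty V] (Γ : SimpleGraph V)
    (hadj : ∀ x y : V, x ≠ y → Γ.Adj x y) :
    vertexConnectivity Γ = Fintype.card V - 1 := by
  classical
  apply le_antisymm
  · apply Nat.sInf_le
    obtain ⟨v⟩ := ‹Nonempty V›
    refine ⟨Finset.univ.erase v, by simp, Or.inr ?_⟩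
    rw [ncard_compl_coe]
    have := Fintype.card_pos (α := V)
    simp only [Finset.card_erase_of_mem (Finset.mem_univ v), Finset.card_univ]
    omega
  · apply le_csInf
    · obtain ⟨v⟩ := ‹Nonempty V›
      exact ⟨Fintype.card V - 1, Finset.univ.erase v, by simp, Or.inr (by
        rw [ncard_compl_coe]
        have := Fintype.card_pos (α := V)
        simp only [Finset.card_erase_of_mem (Finset.mem_univ v), Finset.card_univ]
        omega)⟩
    · rintro m ⟨S, rfl, h | h⟩
      · exfalso
        apply h
        intro u v
        rcases eq_or_ne u v with rfl | hne
        · exact SimpleGraph.Reachable.refl u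
        · exact SimpleGraph.Adj.reachable (hadj u.1 v.1 (fun hh => hne (Subtype.ext hh)))
      · rw [ncard_compl_coe] at h
        have := S.card_le_univ
        omega

lemma minDegree_eq_of_complete {V : Type*} [Fintype V] [Nonempty V] (Γ : SimpleGraph V)
    [DecidableRel Γ.Adj] (hadj : ∀ x y : V, x ≠ y → Γ.Adj x y) :
    Γ.minDegree = Fintype.card V - 1 := by
  classical
  obtain ⟨v, hv⟩ := Γ.exists_minimal_degree_vertex
  rw [hv, ← SimpleGraph.card_neighborFinset_eq_degree]
  have : Γ.neighborFinset v = Finset.univ.erase v := by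
    ext y
    simp only [SimpleGraph.mem_neighborFinset, Finset.mem_erase, Finset.mem_univ, and_true]
    constructor
    · exact fun h => h.ne'
    · exact fun h => (hadj v y (Ne.symm h)).symm.symm
  rw [this, Finset.card_erase_of_mem (Finset.mem_univ v), Finset.card_univ]

lemma pg_degree_eq (hG : IsCyclic G) [DecidableEq G] (x : G) :
    (powerGraph G).degree x
      = ({y : G | orderOf y ∣ orderOf x ∨ orderOf x ∣ orderOf y} : Finset G).card - 1 := by
  classical
  rw [← SimpleGraph.card_neighborFinset_eq_degree]
  have : (powerGraph G).neighborFinset x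
      = ({y : G | orderOf y ∣ orderOf x ∨ orderOf x ∣ orderOf y} : Finset G).erase x := by
    ext y
    simp only [SimpleGraph.mem_neighborFinset, mem_erase, mem_filter, mem_univ, true_and,
      Set.mem_setOf_eq]
    rw [pg_adj_iff hG]
    constructor
    · rintro ⟨hxy, h⟩; exact ⟨fun h' => hxy (h' ▸ rfl), h.symm⟩
    · rintro ⟨hxy, h⟩; exact ⟨fun h' => hxy (h' ▸ rfl), h.symm⟩
  rw [this, Finset.card_erase_of_mem]
  simp

lemma vc_le_cut (hG : IsCyclic G) [DecidableEq G] {d : ℕ} (x y z : G)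
    (hxy : x ≠ y) (hox : orderOf x = d) (hoy : orderOf y = d)
    (hz1 : ¬ orderOf z ∣ d) (hz2 : ¬ d ∣ orderOf z) :
    vertexConnectivity (powerGraph G) + 2
      ≤ ({w : G | orderOf w ∣ d ∨ d ∣ orderOf w} : Finset G).card := by
  classical
  set D : Finset G := ({w : G | orderOf w ∣ d ∨ d ∣ orderOf w} : Finset G) with hD
  have hxD : x ∈ D := by simp [hD, hox]
  have hyD : y ∈ D := by simp [hD, hoy]
  set S : Finset G := (D.erase x).erase y with hS
  have hcard : S.card + 2 = D.card := by
    rw [hS, Finset.card_erase_of_mem (Finset.mem_erase.2 ⟨hxy.symm, hyD⟩),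
      Finset.card_erase_of_mem hxD]
    have : 1 ≤ D.card := Finset.card_pos.2 ⟨x, hxD⟩
    have h2 : 2 ≤ D.card := Finset.one_lt_card.2 ⟨x, hxD, y, hyD, hxy⟩
    omega
  have hxS : x ∉ S := by simp [hS]
  have hzD : z ∉ D := by simp [hD, hz1, hz2]
  have hzS : z ∉ S := fun hc => hzD (Finset.mem_of_mem_erase (Finset.mem_of_mem_erase hc))
  have hzx : z ≠ x := fun hc => hz2 (by rw [hc, hox])
  have hvc : vertexConnectivity (powerGraph G) ≤ S.card := by
    apply Nat.sInf_le
    refine ⟨S, rfl, Or.inl ?_⟩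
    intro hpre
    have hxc : (x : G) ∈ ((↑S : Set G)ᶜ) := by simpa using hxS
    have hzc : (z : G) ∈ ((↑S : Set G)ᶜ) := by simpa using hzS
    have hreach := hpre ⟨x, hxc⟩ ⟨z, hzc⟩
    have hclosed : ∀ u v : ((↑S : Set G)ᶜ : Set G),
        (u.1 = x ∨ u.1 = y) → (SimpleGraph.induce ((↑S : Set G)ᶜ) (powerGraph G)).Adj u v →
        (v.1 = x ∨ v.1 = y) := by
      rintro u v hu huv
      have hadj : (powerGraph G).Adj u.1 v.1 := huv
      rw [pg_adj_iff hG] at hadj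
      have hou : orderOf u.1 = d := by rcases hu with h | h <;> rw [h] <;> [exact hox; exact hoy]
      have hvD : v.1 ∈ D := by
        simp only [hD, Finset.mem_filter, Finset.mem_univ, true_and, Set.mem_setOf_eq]
        rcases hadj.2 with h | h
        · exact Or.inr (hou ▸ h)
        · exact Or.inl (hou ▸ h)
      have hvS : v.1 ∉ S := fun hc => v.2 (Finset.mem_coe.2 hc)
      by_cases hvy : v.1 = y
      · exact Or.inr hvy
      · by_cases hvx : v.1 = x
        · exact Or.inl hvx
        · exact absurd (Finset.mem_erase.2 ⟨hvy, Finset.mem_erase.2 ⟨hvx, hvD⟩⟩) hvS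
    have := reachable_closed (K := {u : ((↑S : Set G)ᶜ : Set G) | u.1 = x ∨ u.1 = y})
      (fun u v hu huv => hclosed u v hu huv) hreach (Or.inl rfl)
    rcases this with h | h
    · exact hzx h
    · have hz : z = y := h
      exact hz1 (by rw [hz, hoy])
  omega


section Forward

lemma natchar {p : ℕ} (hp : p.Prime) (hp2 : p ≠ 2) {α m' : ℕ} (hα : 1 ≤ α)
    (hm'odd : ¬ 2 ∣ m') (hpm' : ¬ p ∣ m') (t : ℕ) (ht : t ∣ 2 * (p ^ α * m')) :
    (¬ (2 * p ^ α ∣ t)) ↔ (t ∣ p ^ α * m' ∨ t ∣ 2 * (p ^ (α - 1) * m')) := by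
  constructor
  · intro hnd
    by_cases h2t : 2 ∣ t
    · obtain ⟨s, rfl⟩ := h2t
      right
      have hs : s ∣ p ^ α * m' := (Nat.mul_dvd_mul_iff_left (by norm_num : 0 < 2)).1 ht
      obtain ⟨u, v, hu, hv, huv⟩ := Nat.dvd_mul.1 hs
      obtain ⟨i, hi, rfl⟩ := (Nat.dvd_prime_pow hp).1 hu
      have hiα : i ≤ α - 1 := by
        rcases Nat.lt_or_ge i α with h' | h'
        · omega
        · exfalso
          apply hnd
          have h1 : p ^ α ∣ p ^ i := pow_dvd_pow p h'
          have h2 : p ^ i ∣ s := Dvd.intro v huv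
          exact mul_dvd_mul_left 2 (h1.trans h2)
      refine mul_dvd_mul_left 2 ?_
      rw [← huv]
      exact mul_dvd_mul (pow_dvd_pow p hiα) hv
    · left
      have hcop : Nat.Coprime t 2 := Nat.coprime_two_right.2 (Nat.odd_iff.2 (by omega))
      exact hcop.dvd_of_dvd_mul_left ht
  · intro hd hc
    rcases hd with hd | hd
    · have h2d : (2 : ℕ) ∣ p ^ α * m' := dvd_trans (dvd_trans (Dvd.intro (p ^ α) rfl) hc) hd
      have hpo : ¬ 2 ∣ p ^ α := fun h2 =>
        hp2 (((Nat.prime_dvd_prime_iff_eq Nat.prime_two hp).1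
          (Nat.prime_two.dvd_of_dvd_pow h2)).symm)
      rcases (Nat.Prime.dvd_mul Nat.prime_two).1 h2d with h' | h'
      exacts [hpo h', hm'odd h']
    · have h1 : 2 * p ^ α ∣ 2 * (p ^ (α - 1) * m') := hc.trans hd
      have h2 : p ^ α ∣ p ^ (α - 1) * m' := (Nat.mul_dvd_mul_iff_left (by norm_num : 0 < 2)).1 h1
      have h3 : p ^ (α - 1) * p ∣ p ^ (α - 1) * m' := by
        rw [← pow_succ, show α - 1 + 1 = α from by omega]
        exact h2
      exact hpm' ((Nat.mul_dvd_mul_iff_left (pow_pos hp.pos _)).1 h3)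

variable {G : Type*} [Group G] [Fintype G]

lemma card_two_dvd_orderOf [DecidableEq G] (hG : IsCyclic G) {m : ℕ}
    (hnm : Fintype.card G = 2 * m) (hmodd : ¬ 2 ∣ m) :
    ({x : G | 2 ∣ orderOf x} : Finset G).card = Fintype.card G - m := by
  have hmn : m ∣ Fintype.card G := ⟨2, by omega⟩
  have e2 : ({x : G | ¬ 2 ∣ orderOf x} : Finset G) = ({x : G | orderOf x ∣ m} : Finset G) := by
    ext x
    simp only [Finset.mem_filter, Finset.mem_univ, true_and, Set.mem_setOf_eq]
    constructor
    · intro hx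
      have hcop : Nat.Coprime (orderOf x) 2 := Nat.coprime_two_right.2 (Nat.odd_iff.2 (by omega))
      exact hcop.dvd_of_dvd_mul_left (hnm ▸ orderOf_dvd_card)
    · intro hx h2x
      exact hmodd (h2x.trans hx)
  have e1 := count_not (G := G) (fun x => 2 ∣ orderOf x)
  rw [e2, card_orderOf_dvd hG hmn] at e1
  have hle : ({x : G | 2 ∣ orderOf x} : Finset G).card ≤ Fintype.card G := by
    simpa using Finset.card_filter_le Finset.univ _
  have hmle : m ≤ Fintype.card G := Nat.le_of_dvd Fintype.card_pos hmn
  omega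

lemma forward (hG : IsCyclic G)
    (h : ¬ ∃ p k : ℕ, p.Prime ∧ (Fintype.card G = p ^ k ∨ Fintype.card G = 2 * p ^ k)) :
    vertexConnectivity (powerGraph G) < (powerGraph G).minDegree := by
  classical
  haveI : Nonempty G := ⟨1⟩
  have hn0 : 0 < Fintype.card G := Fintype.card_pos
  have hn1 : Fintype.card G ≠ 1 := by
    intro h1
    exact h ⟨2, 0, Nat.prime_two, Or.inl (by rw [h1, pow_zero])⟩
  -- two distinct primes divide the order
  have hprimes : ∃ p q : ℕ, p.Prime ∧ q.Prime ∧ p ≠ q ∧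
      p ∣ Fintype.card G ∧ q ∣ Fintype.card G := by
    by_contra hc
    push_neg at hc
    have hmf : (Fintype.card G).minFac.Prime := Nat.minFac_prime hn1
    have huniq : ∀ {q : ℕ}, q.Prime → q ∣ Fintype.card G → q = (Fintype.card G).minFac := by
      intro q hq hqn
      by_contra hne
      exact (hc (Fintype.card G).minFac q hmf hq (Ne.symm hne)
        (Nat.minFac_dvd (Fintype.card G)) hqn)
    have := Nat.eq_prime_pow_of_unique_prime_dvd (by omega) huniq
    exact h ⟨(Fintype.card G).minFac, _, hmf, Or.inl this⟩
  obtain ⟨p, q, hp, hq, hpq, hpn, hqn⟩ := hprimes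
  haveI : Fact p.Prime := ⟨hp⟩
  haveI : Fact q.Prime := ⟨hq⟩
  obtain ⟨u, hu⟩ := exists_prime_orderOf_dvd_card p hpn
  obtain ⟨w, hw⟩ := exists_prime_orderOf_dvd_card q hqn
  have hn2 : 2 ≤ Fintype.card G := by
    have := hp.two_le
    have := Nat.le_of_dvd hn0 hpn
    omega
  -- minimum degree is at most n - 2
  have hδle : (powerGraph G).minDegree + 2 ≤ Fintype.card G := by
    have h1 : (powerGraph G).minDegree ≤ (powerGraph G).degree u :=
      SimpleGraph.minDegree_le_degree _ u
    have huw : u ≠ w := by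
      intro he
      rw [he, hw] at hu
      exact hpq (hu ▸ rfl)
    have h2 : (powerGraph G).neighborFinset u ⊆ (Finset.univ.erase w).erase u := by
      intro y hy
      rw [SimpleGraph.mem_neighborFinset] at hy
      refine Finset.mem_erase.2 ⟨hy.ne', Finset.mem_erase.2 ⟨?_, Finset.mem_univ y⟩⟩
      rintro rfl
      rw [pg_adj_iff hG] at hy
      rcases hy.2 with hh | hh
      · rw [hu, hw] at hh
        exact hpq ((Nat.prime_dvd_prime_iff_eq hp hq).1 hh)
      · rw [hu, hw] at hh
        exact hpq ((Nat.prime_dvd_prime_iff_eq hq hp).1 hh).symm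
    have h3 := Finset.card_le_card h2
    rw [Finset.card_erase_of_mem (Finset.mem_erase.2 ⟨huw, Finset.mem_univ u⟩),
      Finset.card_erase_of_mem (Finset.mem_univ w), Finset.card_univ] at h3
    rw [← SimpleGraph.card_neighborFinset_eq_degree] at h1
    omega
  obtain ⟨x0, hx0⟩ := (powerGraph G).exists_minimal_degree_vertex
  have hdeg0 : (powerGraph G).minDegree
      = ({y : G | orderOf y ∣ orderOf x0 ∨ orderOf x0 ∣ orderOf y} : Finset G).card - 1 := by
    rw [hx0, pg_degree_eq hG]
  have hx0D : 1 ≤ ({y : G | orderOf y ∣ orderOf x0 ∨ orderOf x0 ∣ orderOf y} : Finset G).card :=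
    Finset.card_pos.2 ⟨x0, by simp⟩
  have key : ∃ d : ℕ, d ∣ Fintype.card G ∧ 2 < d ∧
      (∃ z : G, ¬ orderOf z ∣ d ∧ ¬ d ∣ orderOf z) ∧
      ({y : G | orderOf y ∣ d ∨ d ∣ orderOf y} : Finset G).card
        ≤ ({y : G | orderOf y ∣ orderOf x0 ∨ orderOf x0 ∣ orderOf y} : Finset G).card := by
    have hd0n : orderOf x0 ∣ Fintype.card G := orderOf_dvd_card
    rcases Nat.lt_or_ge 2 (orderOf x0) with h3 | hle2
    · refine ⟨orderOf x0, hd0n, h3, ?_, le_rfl⟩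
      by_contra hc
      push_neg at hc
      have hall : ({y : G | orderOf y ∣ orderOf x0 ∨ orderOf x0 ∣ orderOf y} : Finset G)
          = Finset.univ := by
        apply Finset.eq_univ_iff_forall.2
        intro z
        simp only [Finset.mem_filter, Finset.mem_univ, true_and, Set.mem_setOf_eq]
        by_cases hz : orderOf z ∣ orderOf x0
        · exact Or.inl hz
        · exact Or.inr (hc z hz)
      rw [hall, Finset.card_univ] at hdeg0
      omega
    · by_cases h1 : orderOf x0 = 1
      · exfalso
        have hall : ({y : G | orderOf y ∣ orderOf x0 ∨ orderOf x0 ∣ orderOf y} : Finset G)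
            = Finset.univ := by
          apply Finset.eq_univ_iff_forall.2
          intro z
          simp only [Finset.mem_filter, Finset.mem_univ, true_and, Set.mem_setOf_eq]
          exact Or.inr (h1 ▸ one_dvd _)
        rw [hall, Finset.card_univ] at hdeg0
        omega
      · have hd0pos : 0 < orderOf x0 := orderOf_pos x0
        have h2 : orderOf x0 = 2 := by omega
        have h2n : 2 ∣ Fintype.card G := h2 ▸ hd0n
        set a := (Fintype.card G).factorization 2 with hadef
        set m := ordCompl[2] (Fintype.card G) with hmdef
        have hfa : 2^a * m = Fintype.card G := Nat.ordProj_mul_ordCompl_eq_self _ 2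
        have hmodd : ¬ 2 ∣ m := Nat.not_dvd_ordCompl Nat.prime_two (by omega)
        have ha1 : 1 ≤ a := Nat.Prime.factorization_pos_of_dvd Nat.prime_two (by omega) h2n
        have hm0 : m ≠ 0 := by intro hc; rw [hc, mul_zero] at hfa; omega
        have hm1 : m ≠ 1 := by
          intro hc
          exact h ⟨2, a, Nat.prime_two, Or.inl (by rw [← hfa, hc, mul_one])⟩
        have hmn : m ∣ Fintype.card G := ⟨2^a, by rw [← hfa]; ring⟩
        by_cases ha2 : 2 ≤ a
        · refine ⟨2^a, Nat.ordProj_dvd _ 2, ?_, ?_, ?_⟩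
          · have : 2^2 ≤ 2^a := Nat.pow_le_pow_right (by norm_num) ha2
            omega
          · have hq' : m.minFac.Prime := Nat.minFac_prime hm1
            haveI : Fact m.minFac.Prime := ⟨hq'⟩
            have hq'n : m.minFac ∣ Fintype.card G := (Nat.minFac_dvd m).trans hmn
            obtain ⟨z, hz⟩ := exists_prime_orderOf_dvd_card m.minFac hq'n
            have hq'odd : ¬ 2 ∣ m.minFac := fun hcc => hmodd (hcc.trans (Nat.minFac_dvd m))
            refine ⟨z, ?_, ?_⟩
            · rw [hz]
              intro hcc
              have hd2' := hq'.dvd_of_dvd_pow hcc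
              have heq2 := (Nat.prime_dvd_prime_iff_eq hq' Nat.prime_two).1 hd2'
              exact hq'odd (heq2 ▸ dvd_rfl)
            · rw [hz]
              intro hcc
              exact hq'odd (dvd_trans (dvd_pow_self 2 (by omega : a ≠ 0)) hcc)
          · rw [h2]
            apply Finset.card_le_card
            intro y hy
            simp only [Finset.mem_filter, Finset.mem_univ, true_and, Set.mem_setOf_eq] at hy ⊢
            rcases hy with hy | hy
            · obtain ⟨i, hi, he⟩ := (Nat.dvd_prime_pow Nat.prime_two).1 hy
              rcases Nat.eq_zero_or_pos i with rfl | hipos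
              · left; rw [he, pow_zero]; exact one_dvd 2
              · right; rw [he]; exact dvd_pow_self 2 (by omega)
            · right; exact dvd_trans (dvd_pow_self 2 (by omega : a ≠ 0)) hy
        · have ha : a = 1 := by omega
          have hn2m : Fintype.card G = 2 * m := by rw [← hfa, ha, pow_one]
          set p1 := m.minFac with hp1def
          have hp1 : p1.Prime := Nat.minFac_prime hm1
          have hp1m : p1 ∣ m := Nat.minFac_dvd m
          have hp1odd : ¬ 2 ∣ p1 := fun hcc => hmodd (hcc.trans hp1m)
          have hp1_2 : p1 ≠ 2 := fun hcc => hp1odd (hcc ▸ dvd_rfl)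
          have hp1_3 : 3 ≤ p1 := by have := hp1.two_le; omega
          set α := m.factorization p1 with hαdef
          set m' := ordCompl[p1] m with hm'def
          have hPm : p1^α * m' = m := Nat.ordProj_mul_ordCompl_eq_self m p1
          have hα1 : 1 ≤ α := Nat.Prime.factorization_pos_of_dvd hp1 hm0 hp1m
          have hp1m' : ¬ p1 ∣ m' := Nat.not_dvd_ordCompl hp1 hm0
          have hm'0 : m' ≠ 0 := by intro hcc; rw [hcc, mul_zero] at hPm; exact hm0 hPm.symm
          have hm'1 : m' ≠ 1 := by
            intro hcc
            exact h ⟨p1, α, hp1, Or.inr (by rw [hn2m, ← hPm, hcc, mul_one])⟩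
          have hm'm : m' ∣ m := ⟨p1^α, by rw [← hPm]; ring⟩
          have hm'odd : ¬ 2 ∣ m' := fun hcc => hmodd (hcc.trans hm'm)
          have hm'big : p1 + 2 ≤ m' := by
            have hq2 : m'.minFac.Prime := Nat.minFac_prime hm'1
            have hq2m' : m'.minFac ∣ m' := Nat.minFac_dvd m'
            have h1' : p1 ≤ m'.minFac := Nat.minFac_le_of_dvd hq2.two_le (hq2m'.trans hm'm)
            have h2' : m'.minFac ≠ p1 := fun hcc => hp1m' (hcc ▸ hq2m')
            have hq2odd : ¬ 2 ∣ m'.minFac := fun hcc => hm'odd (hcc.trans hq2m')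
            have h3' : m'.minFac ≤ m' := Nat.minFac_le (Nat.pos_of_ne_zero hm'0)
            omega
          have hddvd : 2 * p1^α ∣ Fintype.card G := by
            rw [hn2m, ← hPm]
            exact mul_dvd_mul_left 2 (dvd_mul_right _ _)
          refine ⟨2 * p1^α, hddvd, ?_, ?_, ?_⟩
          · have : p1 ≤ p1^α := le_self_pow₀ (by omega) (by omega)
            omega
          · have hq2 : m'.minFac.Prime := Nat.minFac_prime hm'1
            haveI : Fact m'.minFac.Prime := ⟨hq2⟩
            have hq2n : m'.minFac ∣ Fintype.card G := ((Nat.minFac_dvd m').trans hm'm).trans hmn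
            obtain ⟨z, hz⟩ := exists_prime_orderOf_dvd_card m'.minFac hq2n
            have hq2odd : ¬ 2 ∣ m'.minFac := fun hcc => hm'odd (hcc.trans (Nat.minFac_dvd m'))
            refine ⟨z, ?_, ?_⟩
            · rw [hz]
              intro hcc
              rcases (Nat.Prime.dvd_mul hq2).1 hcc with h' | h'
              · exact hq2odd ((Nat.prime_dvd_prime_iff_eq hq2 Nat.prime_two).1 h' ▸ dvd_rfl)
              · have hdp := hq2.dvd_of_dvd_pow h'
                have heq := (Nat.prime_dvd_prime_iff_eq hq2 hp1).1 hdp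
                exact hp1m' (heq ▸ Nat.minFac_dvd m')
            · rw [hz]
              intro hcc
              exact hq2odd (dvd_trans (dvd_mul_right 2 (p1^α)) hcc)
          · rw [h2]
            set Q := p1^(α-1) with hQdef
            have hPQ : p1^α = p1 * Q := by
              rw [hQdef, ← pow_succ', show α - 1 + 1 = α from by omega]
            have hQ1 : 1 ≤ Q := Nat.one_le_pow _ _ hp1.pos
            have hcnt2 : ({x : G | 2 ∣ orderOf x} : Finset G).card = Fintype.card G - m :=
              card_two_dvd_orderOf hG hn2m hmodd
            have hD2 : ({y : G | orderOf y ∣ 2 ∨ 2 ∣ orderOf y} : Finset G).card + 1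
                = 2 + (Fintype.card G - m) := by
              have hs := Dsplit hG h2n
              rw [Nat.totient_two, hcnt2] at hs
              exact hs
            have htot : (2 * p1^α).totient + Q = p1^α := by
              have hcop : Nat.Coprime 2 (p1^α) :=
                ((Nat.coprime_primes Nat.prime_two hp1).2 (Ne.symm hp1_2)).pow_right α
              rw [Nat.totient_mul hcop, Nat.totient_two, one_mul,
                Nat.totient_prime_pow hp1 (by omega)]
              calc p1^(α-1) * (p1 - 1) + Q = Q * (p1 - 1) + Q := by rw [hQdef]
                _ = Q * ((p1 - 1) + 1) := by ring
                _ = Q * p1 := by rw [show p1 - 1 + 1 = p1 from by omega]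
                _ = p1^α := by rw [hPQ, mul_comm]
            have hsD := Dsplit hG hddvd
            have hcm : ({y : G | ¬ (2 * p1^α) ∣ orderOf y} : Finset G).card = m + Q * m' := by
              have hfe : ({y : G | ¬ (2 * p1^α) ∣ orderOf y} : Finset G)
                  = ({y : G | orderOf y ∣ p1^α * m' ∨ orderOf y ∣ 2 * (Q * m')} : Finset G) := by
                ext y
                simp only [Finset.mem_filter, Finset.mem_univ, true_and, Set.mem_setOf_eq]
                have hyd : orderOf y ∣ 2 * (p1^α * m') := by
                  rw [hPm, ← hn2m]
                  exact orderOf_dvd_card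
                have hch := natchar hp1 hp1_2 hα1 hm'odd hp1m' (orderOf y) hyd
                rw [← hQdef] at hch
                exact hch
              rw [hfe]
              have hc1 : p1^α * m' ∣ Fintype.card G := by rw [hPm]; exact hmn
              have hc2 : 2 * (Q * m') ∣ Fintype.card G := by
                rw [hn2m, ← hPm, hPQ]
                exact mul_dvd_mul_left 2 ⟨p1, by ring⟩
              rw [count_or hG hc1 hc2]
              have hgcd : Nat.gcd (p1^α * m') (2 * (Q * m')) = Q * m' := by
                rw [hPQ, mul_assoc]
                rw [Nat.gcd_mul_right p1 (Q * m') 2]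
                have hg1 : Nat.gcd p1 2 = 1 := (Nat.coprime_primes hp1 Nat.prime_two).2 hp1_2
                rw [hg1, one_mul]
              rw [hgcd, hPm]
              omega
            have hCle : ({y : G | (2 * p1^α) ∣ orderOf y} : Finset G).card ≤ Fintype.card G := by
              simpa using Finset.card_filter_le Finset.univ (fun y : G => (2 * p1^α) ∣ orderOf y)
            have hcm' := count_not (G := G) (fun y => (2 * p1^α) ∣ orderOf y)
            rw [hcm] at hcm'
            have hkey : p1^α + 2*Q ≤ Q * m' := by
              have e : p1^α + 2*Q = Q * (p1 + 2) := by rw [hPQ]; ring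
              rw [e]
              exact Nat.mul_le_mul_left Q hm'big
            have hmlen : m ≤ Fintype.card G := Nat.le_of_dvd hn0 hmn
            omega

  obtain ⟨d, hdn, hd2, ⟨z, hz1, hz2⟩, hle⟩ := key
  obtain ⟨x, y, hxy, hox, hoy⟩ := get_two_of_order hG hdn hd2
  have hcut := vc_le_cut hG x y z hxy hox hoy hz1 hz2
  omega

end Forward

section Backward

variable {G : Type*} [Group G] [Fintype G]

lemma backward_primepow (hG : IsCyclic G) {p k : ℕ} (hp : p.Prime)
    (hcard : Fintype.card G = p ^ k) :
    vertexConnectivity (powerGraph G) = (powerGraph G).minDegree := by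
  classical
  haveI : Nonempty G := ⟨1⟩
  have hadj : ∀ x y : G, x ≠ y → (powerGraph G).Adj x y := by
    intro x y hxy
    rw [pg_adj_iff hG]
    refine ⟨hxy, ?_⟩
    have hx : orderOf x ∣ p ^ k := hcard ▸ orderOf_dvd_card
    have hy : orderOf y ∣ p ^ k := hcard ▸ orderOf_dvd_card
    obtain ⟨i, hi, hei⟩ := (Nat.dvd_prime_pow hp).1 hx
    obtain ⟨j, hj, hej⟩ := (Nat.dvd_prime_pow hp).1 hy
    rcases le_total i j with hij | hij
    · exact Or.inl (by rw [hei, hej]; exact pow_dvd_pow p hij)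
    · exact Or.inr (by rw [hei, hej]; exact pow_dvd_pow p hij)
  rw [vc_eq_of_complete _ hadj, minDegree_eq_of_complete _ hadj]

lemma odd_dvd_of_dvd_two_mul {P t : ℕ} (hPodd : ¬ 2 ∣ P) (ht : t ∣ 2 * P) (hodd : ¬ 2 ∣ t) :
    t ∣ P := by
  have hcop : Nat.Coprime t 2 := Nat.coprime_two_right.2 (Nat.odd_iff.2 (by omega))
  exact hcop.dvd_of_dvd_mul_left ht

lemma pchain {p : ℕ} (hp : p.Prime) {a b k : ℕ} (ha : a ∣ p ^ k) (hb : b ∣ p ^ k) :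
    a ∣ b ∨ b ∣ a := by
  obtain ⟨i, hi, rfl⟩ := (Nat.dvd_prime_pow hp).1 ha
  obtain ⟨j, hj, rfl⟩ := (Nat.dvd_prime_pow hp).1 hb
  rcases le_total i j with h | h
  · exact Or.inl (pow_dvd_pow p h)
  · exact Or.inr (pow_dvd_pow p h)

lemma even_chain {p : ℕ} (hp : p.Prime) {a b k : ℕ} (ha : a ∣ 2 * p ^ k) (hb : b ∣ 2 * p ^ k)
    (ha2 : 2 ∣ a) (hb2 : 2 ∣ b) : a ∣ b ∨ b ∣ a := by
  obtain ⟨a', rfl⟩ := ha2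
  obtain ⟨b', rfl⟩ := hb2
  have ha' : a' ∣ p ^ k := (Nat.mul_dvd_mul_iff_left (by norm_num : 0 < 2)).1 ha
  have hb' : b' ∣ p ^ k := (Nat.mul_dvd_mul_iff_left (by norm_num : 0 < 2)).1 hb
  rcases pchain hp ha' hb' with h | h
  · exact Or.inl (mul_dvd_mul_left 2 h)
  · exact Or.inr (mul_dvd_mul_left 2 h)

lemma induce_reachable {V : Type*} {Γ : SimpleGraph V} {s : Set V} (u v : s)
    (h : u.1 = v.1 ∨ Γ.Adj u.1 v.1) : (SimpleGraph.induce s Γ).Reachable u v := by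
  rcases h with h | h
  · have he : u = v := Subtype.ext h
    rw [he]
  · exact SimpleGraph.Adj.reachable (by exact h)

lemma backward_two_pk (hG : IsCyclic G) {p k : ℕ} (hp : p.Prime) (hpodd : p ≠ 2) (hk : 1 ≤ k)
    (hcard : Fintype.card G = 2 * p ^ k) :
    vertexConnectivity (powerGraph G) = (powerGraph G).minDegree := by
  classical
  haveI : Nonempty G := ⟨1⟩
  have hp3 : 3 ≤ p := by have := hp.two_le; omega
  set P := p ^ k with hPdef
  set R := p ^ (k - 1) with hRdef
  have hPodd : ¬ 2 ∣ P := fun hc =>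
    hpodd (((Nat.prime_dvd_prime_iff_eq Nat.prime_two hp).1 (Nat.prime_two.dvd_of_dvd_pow hc)).symm)
  have hPR : P = R * p := by
    rw [hPdef, hRdef, ← pow_succ, show k - 1 + 1 = k from by omega]
  have hR1 : 1 ≤ R := Nat.one_le_pow _ _ hp.pos
  have hRP : R < P := by
    have : R * 3 ≤ R * p := Nat.mul_le_mul_left R hp3
    omega
  have hP3 : 3 ≤ P := by omega
  have h2n : 2 ∣ Fintype.card G := ⟨P, hcard⟩
  have hPn : P ∣ Fintype.card G := ⟨2, by rw [hcard]; ring⟩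
  have hRdvd : R ∣ P := ⟨p, hPR⟩
  have hn0 : 0 < Fintype.card G := Fintype.card_pos
  -- #{x : ord = n} = totient n, with totient n + R = P
  have hordn : ({x : G | orderOf x = Fintype.card G} : Finset G).card + R = P := by
    rw [hG.card_orderOf_eq_totient dvd_rfl, hcard]
    have hcop : Nat.Coprime 2 P :=
      ((Nat.coprime_primes Nat.prime_two hp).2 (Ne.symm hpodd)).pow_right k
    rw [Nat.totient_mul hcop, Nat.totient_two, one_mul, hPdef,
      Nat.totient_prime_pow hp (by omega)]
    calc p ^ (k-1) * (p - 1) + R = R * (p - 1) + R := by rw [hRdef]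
      _ = R * ((p - 1) + 1) := by ring
      _ = R * p := by rw [show p - 1 + 1 = p from by omega]
      _ = P := hPR.symm
  have hcnt2 : ({x : G | 2 ∣ orderOf x} : Finset G).card = Fintype.card G - P :=
    card_two_dvd_orderOf hG hcard hPodd
  -- minimum degree at most P
  haveI : Fact (Nat.Prime 2) := ⟨Nat.prime_two⟩
  obtain ⟨t, ht⟩ := exists_prime_orderOf_dvd_card 2 h2n
  have hdegt : (powerGraph G).degree t + 1
      = ({y : G | orderOf y ∣ 2 ∨ 2 ∣ orderOf y} : Finset G).card := by
    rw [pg_degree_eq hG, ht]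
    have : 1 ≤ ({y : G | orderOf y ∣ 2 ∨ 2 ∣ orderOf y} : Finset G).card :=
      Finset.card_pos.2 ⟨t, Finset.mem_filter.2 ⟨Finset.mem_univ t, Or.inl (by rw [ht])⟩⟩
    omega
  have hD2 : ({y : G | orderOf y ∣ 2 ∨ 2 ∣ orderOf y} : Finset G).card + 1
      = 2 + (Fintype.card G - P) := by
    have hs := Dsplit hG h2n
    rw [Nat.totient_two, hcnt2] at hs
    exact hs
  have hdelta : (powerGraph G).minDegree ≤ P := by
    have h1 := SimpleGraph.minDegree_le_degree (powerGraph G) t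
    omega
  -- vertex connectivity at least P
  have hvc_ge : P ≤ vertexConnectivity (powerGraph G) := by
    apply le_csInf
    · refine ⟨Fintype.card G - 1, Finset.univ.erase 1, by simp, Or.inr ?_⟩
      rw [ncard_compl_coe]
      simp only [Finset.card_erase_of_mem (Finset.mem_univ (1 : G)), Finset.card_univ]
      omega
    rintro mm ⟨S, rfl, hcond⟩
    by_contra hlt
    push_neg at hlt
    have hScard : S.card + 1 ≤ P := by omega
    -- the complement has at least 2 elements
    have hncard : ((↑S : Set G)ᶜ).ncard = Fintype.card G - S.card := ncard_compl_coe S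
    rcases hcond with hdisc | hone
    swap
    · omega
    apply hdisc
    -- show preconnectedness
    by_cases hhub : ∃ c : G, c ∉ S ∧ (orderOf c = 1 ∨ orderOf c = Fintype.card G)
    · obtain ⟨c, hcS, hc⟩ := hhub
      have hcc : (c : G) ∈ ((↑S : Set G)ᶜ) := by simpa using hcS
      have hadjc : ∀ u : G, u ≠ c → (powerGraph G).Adj c u := by
        intro u huc
        rw [pg_adj_iff hG]
        refine ⟨(Ne.symm huc), ?_⟩
        rcases hc with hc | hc
        · exact Or.inl (hc ▸ one_dvd _)
        · exact Or.inr (hc ▸ orderOf_dvd_card)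
      intro u v
      have hru : (SimpleGraph.induce ((↑S : Set G)ᶜ) (powerGraph G)).Reachable u ⟨c, hcc⟩ := by
        rcases eq_or_ne (u : G) c with he | hne
        · exact induce_reachable _ _ (Or.inl he)
        · exact induce_reachable _ _ (Or.inr (hadjc u.1 hne).symm)
      have hrv : (SimpleGraph.induce ((↑S : Set G)ᶜ) (powerGraph G)).Reachable v ⟨c, hcc⟩ := by
        rcases eq_or_ne (v : G) c with he | hne
        · exact induce_reachable _ _ (Or.inl he)
        · exact induce_reachable _ _ (Or.inr (hadjc v.1 hne).symm)
      exact hru.trans hrv.symm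
    · -- no hub : all elements of order 1 or n are in S
      push_neg at hhub
      have hCsub : ∀ c : G, (orderOf c = 1 ∨ orderOf c = Fintype.card G) → c ∈ S := by
        intro c hc
        by_contra hcS
        rcases hc with hc | hc
        · exact (hhub c hcS).1 hc
        · exact (hhub c hcS).2 hc
      -- counting pieces
      set Cset : Finset G :=
        ({x : G | orderOf x = 1 ∨ orderOf x = Fintype.card G} : Finset G) with hCdef
      have hCtoS : Cset ⊆ S := by
        intro x hx
        simp only [hCdef, Finset.mem_filter, Finset.mem_univ, true_and, Set.mem_setOf_eq] at hx
        exact hCsub x hx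
      have hCcard : Cset.card = 1 + ({x : G | orderOf x = Fintype.card G} : Finset G).card := by
        have : Cset = insert (1 : G) ({x : G | orderOf x = Fintype.card G} : Finset G) := by
          ext x
          simp only [hCdef, Finset.mem_filter, Finset.mem_univ, true_and, Set.mem_setOf_eq,
            Finset.mem_insert, orderOf_eq_one_iff]
        rw [this, Finset.card_insert_of_notMem (by
          simp only [Finset.mem_filter, Finset.mem_univ, true_and, Set.mem_setOf_eq, orderOf_one]
          omega), add_comm]
      set Mset : Finset G :=
        ({x : G | 2 ∣ orderOf x ∧ orderOf x ≠ Fintype.card G} : Finset G) with hMdef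
      have hMcard : Mset.card + ({x : G | orderOf x = Fintype.card G} : Finset G).card
          = Fintype.card G - P := by
        have hsub : ({x : G | orderOf x = Fintype.card G} : Finset G)
            ⊆ ({x : G | 2 ∣ orderOf x} : Finset G) := by
          intro x hx
          simp only [Finset.mem_filter, Finset.mem_univ, true_and, Set.mem_setOf_eq] at hx ⊢
          exact hx ▸ h2n
        have heq : Mset = ({x : G | 2 ∣ orderOf x} : Finset G)
            \ ({x : G | orderOf x = Fintype.card G} : Finset G) := by
          ext x
          simp only [hMdef, Finset.mem_sdiff, Finset.mem_filter, Finset.mem_univ, true_and,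
            Set.mem_setOf_eq]
          try tauto
        rw [heq, Finset.card_sdiff_add_card_eq_card hsub, hcnt2]
      -- Mset has an element outside S
      have hMS : ∃ ms, ms ∈ Mset ∧ ms ∉ S := by
        by_contra hc
        push_neg at hc
        have hsub2 : Cset ∪ Mset ⊆ S := by
          intro x hx
          rcases Finset.mem_union.1 hx with hx | hx
          · exact hCtoS hx
          · exact hc x hx
        have hdisj : Disjoint Cset Mset := by
          rw [Finset.disjoint_left]
          intro x hx hx2
          simp only [hCdef, hMdef, Finset.mem_filter, Finset.mem_univ, true_and,
            Set.mem_setOf_eq] at hx hx2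
          rcases hx with hx | hx
          · rw [hx] at hx2; omega
          · exact hx2.2 hx
        have := Finset.card_le_card hsub2
        rw [Finset.card_union_of_disjoint hdisj] at this
        omega
      obtain ⟨msET, hmsM0, hmsS0⟩ := hMS
      -- pick max order element of Mset ∩ Sᶜ
      obtain ⟨ms, hmsmem, hmsmax⟩ :=
        Finset.exists_max_image (Mset.filter (fun x => x ∉ S)) orderOf
          ⟨msET, Finset.mem_filter.2 ⟨hmsM0, by simpa using hmsS0⟩⟩
      have hmsM : ms ∈ Mset := (Finset.mem_filter.1 hmsmem).1
      have hmsS : ms ∉ S := by simpa using (Finset.mem_filter.1 hmsmem).2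
      simp only [hMdef, Finset.mem_filter, Finset.mem_univ, true_and, Set.mem_setOf_eq] at hmsM
      obtain ⟨hms2, hmsn⟩ := hmsM
      obtain ⟨e, he⟩ := hms2
      have hmsdvd : orderOf ms ∣ 2 * P := hcard ▸ orderOf_dvd_card
      have heP : e ∣ P := by
        rw [he] at hmsdvd
        exact (Nat.mul_dvd_mul_iff_left (by norm_num : 0 < 2)).1 hmsdvd
      have he0 : 0 < e := by
        have := orderOf_pos ms
        omega
      have heR : e ∣ R := by
        obtain ⟨i, hik, hei⟩ := (Nat.dvd_prime_pow hp).1 heP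
        have hik' : i ≤ k - 1 := by
          rcases Nat.lt_or_ge i k with h' | h'
          · omega
          · exfalso
            apply hmsn
            have hik2 : i = k := by omega
            rw [he, hei, hik2, ← hPdef, ← hcard]
        rw [hei, hRdef]
        exact pow_dvd_pow p hik'
      have heRle : e ≤ R := Nat.le_of_dvd (by omega) heR
      have h2edvd : 2 * e ∣ Fintype.card G := by rw [hcard]; exact mul_dvd_mul_left 2 heP
      have hedvd : e ∣ Fintype.card G := heP.trans hPn
      have heodd : ¬ 2 ∣ e := fun hc => hPodd (hc.trans heP)
      have hEcard : ({x : G | orderOf x ∣ 2*e ∧ 2 ∣ orderOf x} : Finset G).card + e = 2*e := by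
        have hsub : ({x : G | orderOf x ∣ e} : Finset G)
            ⊆ ({x : G | orderOf x ∣ 2*e} : Finset G) := by
          intro x hx
          simp only [Finset.mem_filter, Finset.mem_univ, true_and, Set.mem_setOf_eq] at hx ⊢
          exact hx.trans (dvd_mul_left e 2)
        have heq2 : ({x : G | orderOf x ∣ 2*e ∧ 2 ∣ orderOf x} : Finset G)
            = ({x : G | orderOf x ∣ 2*e} : Finset G) \ ({x : G | orderOf x ∣ e} : Finset G) := by
          ext x
          simp only [Finset.mem_sdiff, Finset.mem_filter, Finset.mem_univ, true_and,
            Set.mem_setOf_eq]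
          constructor
          · rintro ⟨h1, h2⟩
            exact ⟨h1, fun hcc => heodd (dvd_trans h2 hcc)⟩
          · rintro ⟨h1, h2⟩
            refine ⟨h1, ?_⟩
            by_contra hodd2
            exact h2 (odd_dvd_of_dvd_two_mul heodd h1 hodd2)
        have hc3 := Finset.card_sdiff_add_card_eq_card hsub
        rw [card_orderOf_dvd hG h2edvd, card_orderOf_dvd hG hedvd] at hc3
        rw [heq2]
        omega
      by_cases hbr : ∃ x' : G, x' ∉ S ∧ orderOf x' ∣ e ∧ x' ≠ 1
      · obtain ⟨x', hx'S, hx'e, hx'1⟩ := hbr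
        have hx'odd : ¬ 2 ∣ orderOf x' := fun hc => heodd (dvd_trans hc hx'e)
        have hadjmx : (powerGraph G).Adj ms x' := by
          rw [pg_adj_iff hG]
          refine ⟨?_, Or.inr (hx'e.trans (by rw [he]; exact dvd_mul_left e 2))⟩
          intro hc
          exact hx'odd (by rw [← hc, he]; exact dvd_mul_right 2 e)
        have hmsC : ms ∈ ((↑S : Set G)ᶜ) := by simpa using hmsS
        have hx'C : x' ∈ ((↑S : Set G)ᶜ) := by simpa using hx'S
        have hkey : ∀ u : ((↑S : Set G)ᶜ : Set G),
            (SimpleGraph.induce ((↑S : Set G)ᶜ) (powerGraph G)).Reachable u ⟨ms, hmsC⟩ := by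
          intro u
          have huS : u.1 ∉ S := fun hc => u.2 (Finset.mem_coe.2 hc)
          have hu1 : orderOf u.1 ≠ 1 := (hhub u.1 huS).1
          have hun : orderOf u.1 ≠ Fintype.card G := (hhub u.1 huS).2
          have hudvd : orderOf u.1 ∣ 2 * P := hcard ▸ orderOf_dvd_card
          by_cases hu2 : 2 ∣ orderOf u.1
          · have hch := even_chain hp hudvd hmsdvd
              hu2 (show 2 ∣ orderOf ms by rw [he]; exact dvd_mul_right 2 e)
            apply induce_reachable
            rcases eq_or_ne u.1 ms with hc | hc
            · exact Or.inl hc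
            · exact Or.inr ((pg_adj_iff hG _ _).2 ⟨hc, hch⟩)
          · have huP : orderOf u.1 ∣ P := odd_dvd_of_dvd_two_mul hPodd hudvd hu2
            have hx'P : orderOf x' ∣ P := hx'e.trans heP
            have hch := pchain hp huP hx'P
            have hr1 : (SimpleGraph.induce ((↑S : Set G)ᶜ) (powerGraph G)).Reachable
                u ⟨x', hx'C⟩ := by
              apply induce_reachable
              rcases eq_or_ne u.1 x' with hc | hc
              · exact Or.inl hc
              · exact Or.inr ((pg_adj_iff hG _ _).2 ⟨hc, hch⟩)
            have hr2 : (SimpleGraph.induce ((↑S : Set G)ᶜ) (powerGraph G)).Reachable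
                ⟨x', hx'C⟩ ⟨ms, hmsC⟩ :=
              induce_reachable _ _ (Or.inr hadjmx.symm)
            exact hr1.trans hr2
        intro u v
        exact (hkey u).trans (hkey v).symm
      · push_neg at hbr
        exfalso
        set badP : Finset G := ({x : G | orderOf x ∣ e ∧ x ≠ 1} : Finset G) with hbPdef
        set badM : Finset G := ({x : G | (2 ∣ orderOf x ∧ orderOf x ≠ Fintype.card G)
            ∧ ¬ orderOf x ∣ 2*e} : Finset G) with hbMdef
        have hbPS : badP ⊆ S := by
          intro x hx
          simp only [hbPdef, Finset.mem_filter, Finset.mem_univ, true_and,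
            Set.mem_setOf_eq] at hx
          by_contra hxS
          exact hx.2 (hbr x hxS hx.1)
        have hbMS : badM ⊆ S := by
          intro x hx
          simp only [hbMdef, Finset.mem_filter, Finset.mem_univ, true_and,
            Set.mem_setOf_eq] at hx
          by_contra hxS
          have hxmem : x ∈ Mset.filter (fun x => x ∉ S) := by
            refine Finset.mem_filter.2 ⟨?_, by simpa using hxS⟩
            simp only [hMdef, Finset.mem_filter, Finset.mem_univ, true_and, Set.mem_setOf_eq]
            exact hx.1
          have hle := hmsmax x hxmem
          have hxdvd : orderOf x ∣ 2 * P := hcard ▸ orderOf_dvd_card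
          rcases even_chain hp hxdvd (show (2*e : ℕ) ∣ 2 * P from mul_dvd_mul_left 2 heP)
            hx.1.1 (dvd_mul_right 2 e) with hd | hd
          · exact hx.2 hd
          · have h2e_le : 2*e ≤ orderOf x := Nat.le_of_dvd (orderOf_pos x) hd
            rw [he] at hle
            have hxeq : orderOf x = 2*e := by omega
            exact hx.2 (hxeq ▸ dvd_rfl)
        have hbPcard : badP.card + 1 = e := by
          have hins : ({x : G | orderOf x ∣ e} : Finset G) = insert (1 : G) badP := by
            ext x
            simp only [hbPdef, Finset.mem_filter, Finset.mem_univ, true_and, Set.mem_setOf_eq,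
              Finset.mem_insert]
            constructor
            · intro hx
              by_cases hx1 : x = 1
              · exact Or.inl hx1
              · exact Or.inr ⟨hx, hx1⟩
            · rintro (rfl | ⟨hx, -⟩)
              · rw [orderOf_one]; exact one_dvd e
              · exact hx
          have h1nb : (1 : G) ∉ badP := by
            simp only [hbPdef, Finset.mem_filter, Finset.mem_univ, true_and, Set.mem_setOf_eq]
            intro hc
            exact absurd rfl hc.2
          have := card_orderOf_dvd hG hedvd
          rw [hins, Finset.card_insert_of_notMem h1nb] at this
          omega
        have hbMcard : badM.card + e = Mset.card := by
          have hbM2 : badM = Mset \ ({x : G | orderOf x ∣ 2*e} : Finset G) := by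
            ext x
            simp only [hbMdef, hMdef, Finset.mem_sdiff, Finset.mem_filter, Finset.mem_univ,
              true_and, Set.mem_setOf_eq]
          have hMint : Mset ∩ ({x : G | orderOf x ∣ 2*e} : Finset G)
              = ({x : G | orderOf x ∣ 2*e ∧ 2 ∣ orderOf x} : Finset G) := by
            ext x
            simp only [hMdef, Finset.mem_inter, Finset.mem_filter, Finset.mem_univ,
              true_and, Set.mem_setOf_eq]
            constructor
            · rintro ⟨⟨h1, -⟩, h2⟩
              exact ⟨h2, h1⟩
            · rintro ⟨h1, h2⟩
              refine ⟨⟨h2, ?_⟩, h1⟩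
              intro hceq
              rw [hceq] at h1
              have := Nat.le_of_dvd (by omega) h1
              omega
          have hc4 := Finset.card_inter_add_card_sdiff Mset
            ({x : G | orderOf x ∣ 2*e} : Finset G)
          rw [hMint] at hc4
          rw [hbM2]
          omega
        have hdisj1 : Disjoint Cset badP := by
          rw [Finset.disjoint_left]
          intro x hx hx2
          simp only [hCdef, hbPdef, Finset.mem_filter, Finset.mem_univ, true_and,
            Set.mem_setOf_eq] at hx hx2
          rcases hx with hx | hx
          · exact hx2.2 (orderOf_eq_one_iff.1 hx)
          · apply heodd
            have h2x : (2 : ℕ) ∣ orderOf x := hx ▸ h2n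
            exact dvd_trans h2x hx2.1
        have hdisj2 : Disjoint (Cset ∪ badP) badM := by
          rw [Finset.disjoint_left]
          intro x hx hx2
          simp only [hbMdef, Finset.mem_filter, Finset.mem_univ, true_and,
            Set.mem_setOf_eq] at hx2
          rcases Finset.mem_union.1 hx with hx | hx
          · simp only [hCdef, Finset.mem_filter, Finset.mem_univ, true_and,
              Set.mem_setOf_eq] at hx
            rcases hx with hx | hx
            · rw [hx] at hx2
              omega
            · exact hx2.1.2 hx
          · simp only [hbPdef, Finset.mem_filter, Finset.mem_univ, true_and,
              Set.mem_setOf_eq] at hx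
            exact hx2.2 (hx.1.trans (dvd_mul_left e 2))
        have hsubU : Cset ∪ badP ∪ badM ⊆ S := by
          intro x hx
          rcases Finset.mem_union.1 hx with hx | hx
          · rcases Finset.mem_union.1 hx with hx | hx
            · exact hCtoS hx
            · exact hbPS hx
          · exact hbMS hx
        have hfin := Finset.card_le_card hsubU
        rw [Finset.card_union_of_disjoint hdisj2, Finset.card_union_of_disjoint hdisj1] at hfin
        omega

  have hvc_le := vc_le_minDegree (powerGraph G)
  omega

end Backward
end PGAux

theorem power_graph_kappa_eq_delta_iff_cyclic
    {G : Type*} [Group G] [Fintype G] (hG : IsCyclic G) :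
    vertexConnectivity (powerGraph G) = (powerGraph G).minDegree ↔
      ∃ p k : ℕ, p.Prime ∧ (Fintype.card G = p ^ k ∨ Fintype.card G = 2 * p ^ k) := by
  constructor
  · intro heq
    by_contra hc
    exact absurd heq (Nat.ne_of_lt (PGAux.forward hG hc))
  · rintro ⟨p, k, hp, hcase | hcase⟩
    · exact PGAux.backward_primepow hG hp hcase
    · by_cases hp2 : p = 2
      · subst hp2
        exact PGAux.backward_primepow hG Nat.prime_two
          (show Fintype.card G = 2 ^ (k + 1) by rw [hcase, pow_succ, mul_comm])
      · rcases Nat.eq_zero_or_pos k with rfl | hk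
        · exact PGAux.backward_primepow hG Nat.prime_two
            (show Fintype.card G = 2 ^ 1 by rw [hcase, pow_zero, mul_one, pow_one])
        · exact PGAux.backward_two_pk hG hp hp2 hk hcase
end

section
/- Let G be a finite nilpotent group of order n = p_1^{α_1} ··· p_r^{α_r} with distinct primes p_1 < ··· < p_r, let P_i denote the unique Sylow p_i-subgroup, and for x ∈ G write x = x_1 x_2 ··· x_r with x_i ∈ P_i the unique such decomposition. For x ∈ G \ {e}, let τ_x = { j ∈ [r] : x_j ≠ e }. Then the sets A_x = { y ∈ G : y ≠ x and x ∈ ⟨∏_{i ∈ τ_x} y_i⟩ } and B_x = { y ∈ G : y ≠ x and x ∈ ⟨y⟩ } are equal. -/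
theorem list_ofFn_prod_eq_noncommProd {M : Type*} [Monoid M] {n : ℕ} (f : Fin n → M)
    (comm : ((Finset.univ : Finset (Fin n)) : Set (Fin n)).Pairwise (Function.onFun Commute f)) :
    Finset.univ.noncommProd f comm = (List.ofFn f).prod := by
  unfold Finset.noncommProd
  have h : Multiset.map f Finset.univ.val = ((List.ofFn f : List M) : Multiset M) := Fin.univ_val_map f
  rw [← Multiset.noncommProd_coe (List.ofFn f) (h ▸ Finset.noncommProd_lemma _ f comm)]
  congr 1

open scoped Classical in
/-- Lemma on `A_x = B_x`: for nonidentity `x` with Sylow components `xc`, an element `y ≠ x`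
satisfies `x ∈ ⟨∏_{i ∈ τ_x} y_i⟩` iff `x ∈ ⟨y⟩`. -/
theorem A_x_eq_B_x
    {G : Type*} [Group G] [Fintype G] (hnil : Group.IsNilpotent G)
    (r : ℕ) (p α : Fin r → ℕ) (P : Fin r → Subgroup G)
    (hp : ∀ i, (p i).Prime) (hmono : StrictMono p) (hα : ∀ i, 1 ≤ α i)
    (hcard : Fintype.card G = ∏ i, p i ^ α i)
    (hP : ∀ i, Nat.card ↥(P i) = p i ^ α i)
    (x : G) (hx1 : x ≠ 1) (xc : Fin r → G) (hxc : ∀ i, xc i ∈ P i)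
    (hxprod : x = (List.ofFn xc).prod) :
    ∀ (y : G) (yc : Fin r → G), (∀ i, yc i ∈ P i) → y = (List.ofFn yc).prod →
      ((y ≠ x ∧
          x ∈ Subgroup.zpowers ((List.ofFn (fun i => if xc i ≠ 1 then yc i else 1)).prod)) ↔
        (y ≠ x ∧ x ∈ Subgroup.zpowers y)) := by
  classical
  have hfact : ∀ i, Fact (p i).Prime := fun i => ⟨hp i⟩
  have hGcard : Nat.card G = ∏ i, p i ^ α i := by
    rw [Nat.card_eq_fintype_card, hcard]
  have hppcop : ∀ {i j : Fin r}, i ≠ j → Nat.Coprime (p i ^ α i) (p j ^ α j) := by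
    intro i j hij
    exact Nat.Coprime.pow _ _ ((Nat.coprime_primes (hp i) (hp j)).mpr (hmono.injective.ne hij))
  have hnormal : ∀ i, (P i).Normal := by
    intro i
    haveI := hfact i
    have hfa : (Nat.card G).factorization (p i) = α i := by
      rw [hGcard, Nat.factorization_prod (fun j _ => pow_ne_zero _ (hp j).pos.ne')]
      rw [Finset.sum_apply']
      rw [Finset.sum_eq_single i]
      · rw [Nat.Prime.factorization_pow (hp i), Finsupp.single_eq_same]
      · intro j _ hji
        rw [Nat.Prime.factorization_pow (hp j),
          Finsupp.single_eq_of_ne' (hmono.injective.ne hji)]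
      · simp
    have hc : Nat.card ↥(P i) = p i ^ (Nat.card G).factorization (p i) := by
      rw [hfa, hP]
    have key : ∀ (q : ℕ) (_hq : Fact q.Prime) (S : Sylow q G), (↑S : Subgroup G).Normal :=
      ((isNilpotent_of_finite_tfae (G := G)).out 0 3).mp hnil
    have := key (p i) (hfact i) (Sylow.ofCard (P i) hc)
    rwa [Sylow.coe_ofCard] at this
  have hcomm : Pairwise fun i j : Fin r => ∀ x y : G, x ∈ P i → y ∈ P j → Commute x y := by
    intro i j hij
    apply Subgroup.commute_of_normal_of_disjoint _ _ (hnormal i) (hnormal j)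
    rw [disjoint_iff]
    apply Subgroup.inf_eq_bot_of_coprime
    rw [hP, hP]; exact hppcop hij
  haveI : ∀ i, Fintype ↥(P i) := fun i => Fintype.ofFinite _
  have hcop' : Pairwise fun i j => Nat.Coprime (Fintype.card ↥(P i)) (Fintype.card ↥(P j)) := by
    intro i j hij
    rw [← Nat.card_eq_fintype_card, ← Nat.card_eq_fintype_card, hP, hP]
    exact hppcop hij
  have hind := Subgroup.independent_of_coprime_order hcomm hcop'
  set φ := Subgroup.noncommPiCoprod hcomm with hφdef
  have hinj : Function.Injective φ := Subgroup.injective_noncommPiCoprod_of_iSupIndep hind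
  have hφ_eq : ∀ c : ∀ i, ↥(P i), φ c = (List.ofFn fun i => ((c i : G))).prod := by
    intro c
    rw [hφdef, Subgroup.noncommPiCoprod_apply]
    exact list_ofFn_prod_eq_noncommProd _ _
  set X : ∀ i, ↥(P i) := fun i => ⟨xc i, hxc i⟩ with hX
  have hxφ : x = φ X := by rw [hφ_eq]; exact hxprod
  -- membership characterization
  have hmem : ∀ c : ∀ i, ↥(P i),
      (x ∈ Subgroup.zpowers (φ c) ↔ ∃ k : ℤ, ∀ i, c i ^ k = X i) := by
    intro c
    rw [Subgroup.mem_zpowers_iff]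
    constructor
    · rintro ⟨k, hk⟩
      refine ⟨k, fun i => ?_⟩
      have h1 : φ (c ^ k) = φ X := by rw [map_zpow, hk, ← hxφ]
      exact congrFun (hinj h1) i
    · rintro ⟨k, hk⟩
      refine ⟨k, ?_⟩
      rw [← map_zpow, hxφ]
      congr 1
      funext i
      exact hk i
  intro y yc hyc hyprod
  set Y : ∀ i, ↥(P i) := fun i => ⟨yc i, hyc i⟩ with hY
  have hyφ : y = φ Y := by rw [hφ_eq]; exact hyprod
  set Z : ∀ i, ↥(P i) := fun i => if xc i ≠ 1 then Y i else 1 with hZ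
  have hzφ : (List.ofFn (fun i => if xc i ≠ 1 then yc i else 1)).prod = φ Z := by
    have hfun : (fun i => if xc i ≠ 1 then yc i else 1) = fun i => ((Z i : G)) := by
      funext i
      by_cases h : xc i ≠ 1
      · simp [hZ, hY, h]
      · simp [hZ, hY, h, not_not.mp h]
    rw [hφ_eq, hfun]
  -- order divisibility helper
  have hpow : ∀ (i : Fin r) (m : ℤ), ((p i ^ α i : ℕ) : ℤ) ∣ m → Y i ^ m = 1 := by
    intro i m hm
    refine orderOf_dvd_iff_zpow_eq_one.mp (dvd_trans ?_ hm)
    exact_mod_cast Int.natCast_dvd_natCast.mpr (hP i ▸ orderOf_dvd_natCard (Y i))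
  apply and_congr_right
  intro _
  rw [hzφ, hyφ, hmem Z, hmem Y]
  constructor
  · rintro ⟨k, hk⟩
    set T : Finset (Fin r) := Finset.univ.filter (fun i => xc i ≠ 1) with hT
    set N : ℕ := ∏ i ∈ T, p i ^ α i with hN
    set M : ℕ := ∏ i ∈ Tᶜ, p i ^ α i with hM
    have hMN : Nat.Coprime M N := by
      apply Nat.Coprime.prod_left
      intro i hi
      apply Nat.Coprime.prod_right
      intro j hj
      apply hppcop
      rintro rfl
      exact (Finset.mem_compl.mp hi) hj
    obtain ⟨a, b, hab⟩ : IsCoprime (M : ℤ) (N : ℤ) := Nat.isCoprime_iff_coprime.mpr hMN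
    refine ⟨k * (a * (M : ℤ)), fun i => ?_⟩
    by_cases h : xc i ≠ 1
    · have hZi : Z i = Y i := by simp [hZ, h]
      have hNi : ((p i ^ α i : ℕ) : ℤ) ∣ (N : ℤ) :=
        Int.natCast_dvd_natCast.mpr
          (Finset.dvd_prod_of_mem _ (by simp [hT, h]))
      have h1 : Y i ^ (N : ℤ) = 1 := hpow i _ hNi
      have h2 : k * (a * (M : ℤ)) = k - (N : ℤ) * (k * b) := by linear_combination k * hab
      rw [h2, zpow_sub, zpow_mul, h1, one_zpow, inv_one, mul_one, ← hZi]
      exact hk i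
    · push_neg at h
      have hXi : X i = 1 := Subtype.ext h
      have hMi : ((p i ^ α i : ℕ) : ℤ) ∣ (M : ℤ) :=
        Int.natCast_dvd_natCast.mpr
          (Finset.dvd_prod_of_mem _ (by simp [hT, h]))
      have h3 : ((p i ^ α i : ℕ) : ℤ) ∣ k * (a * (M : ℤ)) :=
        dvd_trans hMi ⟨k * a, by ring⟩
      rw [hpow i _ h3, hXi]
  · rintro ⟨k, hk⟩
    refine ⟨k, fun i => ?_⟩
    by_cases h : xc i ≠ 1
    · have hZi : Z i = Y i := by simp [hZ, h]
      rw [hZi]; exact hk i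
    · push_neg at h
      have hXi : X i = 1 := Subtype.ext h
      have hZi : Z i = 1 := by simp [hZ, h]
      rw [hZi, one_zpow, hXi]
end

section
/- Let G be a finite nilpotent group of order n = p_1^{α_1} ··· p_r^{α_r} with distinct primes p_1 < ··· < p_r, let P_i denote the unique Sylow p_i-subgroup, and for x ∈ G write x = x_1 ··· x_r with x_i ∈ P_i. For x ∈ G \ {e}, with τ_x = { j ∈ [r] : x_j ≠ e }, the degree of x in the power graph P(G) equals deg(x) = o(x) − φ(o(x)) + (∏_{j ∈ [r] \ τ_x} p_j^{α_j}) · |{ y ∈ ∏_{i ∈ τ_x} P_i : x ∈ ⟨y⟩ }| − 1. -/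
lemma noncommProd_univ_fin_eq_ofFn {M : Type*} [Monoid M] {r : ℕ} (f : Fin r → M)
    (h : ((Finset.univ : Finset (Fin r)) : Set (Fin r)).Pairwise (Function.onFun Commute f)) :
    Finset.univ.noncommProd f h = (List.ofFn f).prod := by
  have : Finset.univ.noncommProd f h
      = Multiset.noncommProd (↑((List.finRange r).map f)) (by
          rw [← Multiset.map_coe]; exact Finset.noncommProd_lemma _ f h) := rfl
  rw [this, Multiset.noncommProd_coe, ← List.ofFn_eq_map]

lemma prod_coprime_dvd {ι : Type*} (s : Finset ι) (f : ι → ℕ) (n : ℕ)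
    (hc : (s : Set ι).Pairwise (Function.onFun Nat.Coprime f)) (h : ∀ i ∈ s, f i ∣ n) :
    (∏ i ∈ s, f i) ∣ n := by
  classical
  induction s using Finset.induction_on with
  | empty => simp
  | @insert a t ha ih =>
    rw [Finset.prod_insert ha]
    have hcop : Nat.Coprime (f a) (∏ i ∈ t, f i) :=
      Nat.Coprime.prod_right fun i hi =>
        hc (Finset.mem_insert_self a t) (Finset.mem_insert_of_mem hi)
          (fun he => ha (he ▸ hi))
    exact hcop.mul_dvd_of_dvd_of_dvd (h a (Finset.mem_insert_self a t))
      (ih (hc.mono (by simp [Finset.coe_insert, Set.subset_insert]))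
        (fun i hi => h i (Finset.mem_insert_of_mem hi)))

section PiGroup
variable {r : ℕ} {f : Fin r → Type*} [∀ i, Group (f i)]

lemma card_pi_subgroup [∀ i, Finite (f i)] (K : ∀ i, Subgroup (f i)) :
    Nat.card ↥(Subgroup.pi Set.univ K) = ∏ i, Nat.card ↥(K i) := by
  rw [← Nat.card_pi]
  refine Nat.card_congr ⟨fun c i => ⟨c.1 i, (Subgroup.mem_pi _).mp c.2 i (Set.mem_univ i)⟩,
    fun d => ⟨fun i => d i, (Subgroup.mem_pi _).mpr fun i _ => (d i).2⟩,
    fun c => rfl, fun d => rfl⟩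

lemma orderOf_pi_eq_prod [∀ i, Finite (f i)]
    (hcop : Pairwise fun i j => Nat.Coprime (Nat.card (f i)) (Nat.card (f j)))
    (b : ∀ i, f i) : orderOf b = ∏ i, orderOf (b i) := by
  apply Nat.dvd_antisymm
  · rw [orderOf_dvd_iff_pow_eq_one]
    funext i
    rw [Pi.pow_apply, Pi.one_apply, ← orderOf_dvd_iff_pow_eq_one]
    exact Finset.dvd_prod_of_mem _ (Finset.mem_univ i)
  · refine prod_coprime_dvd Finset.univ _ _ (fun i _ j _ hij => ?_) (fun i _ => ?_)
    · exact Nat.Coprime.coprime_dvd_left (orderOf_dvd_natCard (b i))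
        ((hcop hij).coprime_dvd_right (orderOf_dvd_natCard (b j)))
    · rw [orderOf_dvd_iff_pow_eq_one]
      simpa using congrFun (pow_orderOf_eq_one b) i

lemma zpowers_pi_eq [∀ i, Finite (f i)]
    (hcop : Pairwise fun i j => Nat.Coprime (Nat.card (f i)) (Nat.card (f j)))
    (b : ∀ i, f i) :
    Subgroup.zpowers b = Subgroup.pi Set.univ (fun i => Subgroup.zpowers (b i)) := by
  refine Subgroup.eq_of_le_of_card_ge
    (Subgroup.zpowers_le.mpr ((Subgroup.mem_pi _).mpr fun i _ => Subgroup.mem_zpowers (b i))) ?_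
  rw [card_pi_subgroup, Nat.card_zpowers, orderOf_pi_eq_prod hcop]
  exact le_of_eq (Finset.prod_congr rfl fun i _ => Nat.card_zpowers (b i))

lemma mem_zpowers_pi_iff [∀ i, Finite (f i)]
    (hcop : Pairwise fun i j => Nat.Coprime (Nat.card (f i)) (Nat.card (f j)))
    (a b : ∀ i, f i) :
    a ∈ Subgroup.zpowers b ↔ ∀ i, a i ∈ Subgroup.zpowers (b i) := by
  rw [zpowers_pi_eq hcop b, Subgroup.mem_pi]
  exact ⟨fun h i => h i (Set.mem_univ i), fun h i _ => h i⟩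

end PiGroup

lemma exists_pos_pow_iff_mem_zpowers {G : Type*} [Group G] [Fintype G] (x y : G) :
    (∃ k : ℕ, 0 < k ∧ x = y ^ k) ↔ x ∈ Subgroup.zpowers y := by
  constructor
  · rintro ⟨k, -, rfl⟩
    exact ⟨(k : ℤ), (zpow_natCast y k).symm ▸ rfl⟩
  · intro h
    obtain ⟨k, hk⟩ := (Submonoid.mem_powers_iff _ _).mp (mem_powers_iff_mem_zpowers.mpr h)
    rcases Nat.eq_zero_or_pos k with rfl | hkpos
    · exact ⟨orderOf y, orderOf_pos y, by rw [pow_orderOf_eq_one, ← hk, pow_zero]⟩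
    · exact ⟨k, hkpos, hk.symm⟩

lemma powerGraph_adj_iff {G : Type*} [Group G] [Fintype G] (x y : G) :
    (powerGraph G).Adj x y ↔
      x ≠ y ∧ (x ∈ Subgroup.zpowers y ∨ y ∈ Subgroup.zpowers x) := by
  show (x ≠ y ∧ _) ↔ _
  rw [exists_pos_pow_iff_mem_zpowers, exists_pos_pow_iff_mem_zpowers]

open Finset in
lemma degree_powerGraph_eq {G : Type*} [Group G] [Fintype G] (x : G) :
    (powerGraph G).degree x + 1 + Nat.totient (orderOf x)
      = orderOf x + Nat.card {y : G // x ∈ Subgroup.zpowers y} := by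
  classical
  set S : Finset G := univ.filter (· ∈ Subgroup.zpowers x) with hS
  set A : Finset G := univ.filter (fun y => x ∈ Subgroup.zpowers y) with hA
  have hnbr : (powerGraph G).neighborFinset x = (S ∪ A).erase x := by
    ext y
    rw [SimpleGraph.mem_neighborFinset, powerGraph_adj_iff, mem_erase, mem_union, hS, hA]
    simp only [mem_filter, mem_univ, true_and]
    constructor
    · rintro ⟨h1, h2⟩; exact ⟨h1.symm, h2.symm⟩
    · rintro ⟨h1, h2⟩; exact ⟨h1.symm, h2.symm⟩
  have hxS : x ∈ S := by simp [hS, Subgroup.mem_zpowers]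
  have hxSA : x ∈ S ∪ A := mem_union_left _ hxS
  have hdeg : (powerGraph G).degree x = (S ∪ A).card - 1 := by
    rw [SimpleGraph.degree, hnbr, card_erase_of_mem hxSA]
  have hcardS : S.card = orderOf x := by
    rw [hS, ← Fintype.card_subtype, ← Nat.card_eq_fintype_card]
    exact Nat.card_zpowers x
  have hcardA : A.card = Nat.card {y : G // x ∈ Subgroup.zpowers y} := by
    rw [hA, ← Fintype.card_subtype, ← Nat.card_eq_fintype_card]
  have hinter : (S ∩ A).card = Nat.totient (orderOf x) := by
    have hset : S ∩ A
        = univ.filter (fun y => y ∈ Subgroup.zpowers x ∧ orderOf y = orderOf x) := by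
      ext y
      simp only [hS, hA, mem_inter, mem_filter, mem_univ, true_and]
      constructor
      · rintro ⟨hy, hx⟩
        have h3 : Subgroup.zpowers y = Subgroup.zpowers x :=
          le_antisymm (Subgroup.zpowers_le.mpr hy) (Subgroup.zpowers_le.mpr hx)
        exact ⟨hy, by rw [← Nat.card_zpowers, ← Nat.card_zpowers, h3]⟩
      · rintro ⟨hy, hord⟩
        have h3 : Subgroup.zpowers y = Subgroup.zpowers x :=
          Subgroup.eq_of_le_of_card_ge (Subgroup.zpowers_le.mpr hy)
            (by rw [Nat.card_zpowers, Nat.card_zpowers, hord])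
        exact ⟨hy, h3 ▸ Subgroup.mem_zpowers x⟩
    rw [hset, ← Fintype.card_subtype]
    have e1 : {y : G // y ∈ Subgroup.zpowers x ∧ orderOf y = orderOf x}
        ≃ {z : ↥(Subgroup.zpowers x) // orderOf z = orderOf x} :=
      (Equiv.subtypeSubtypeEquivSubtypeInter (· ∈ Subgroup.zpowers x)
        (fun y => orderOf y = orderOf x)).symm.trans
        (Equiv.subtypeEquivRight (fun z => by rw [Subgroup.orderOf_coe]))
    haveI : IsCyclic ↥(Subgroup.zpowers x) := by
      refine ⟨⟨⟨x, Subgroup.mem_zpowers x⟩, fun z => ?_⟩⟩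
      obtain ⟨k, hk⟩ := Subgroup.mem_zpowers_iff.mp z.2
      exact Subgroup.mem_zpowers_iff.mpr ⟨k, Subtype.ext (by simpa using hk)⟩
    rw [Fintype.card_congr e1, Fintype.card_subtype]
    exact IsCyclic.card_orderOf_eq_totient
      (by rw [← Nat.card_eq_fintype_card, Nat.card_zpowers])
  have hui : (S ∪ A).card + (S ∩ A).card = S.card + A.card :=
    card_union_add_card_inter S A
  have h1 : 1 ≤ (S ∪ A).card := card_pos.mpr ⟨x, hxSA⟩
  omega

open scoped Classical in
/-- The degree of a nonidentity vertex `x` of the power graph of a finite nilpotent group. -/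
theorem degree_formula_nilpotent
    {G : Type*} [Group G] [Fintype G] (hnil : Group.IsNilpotent G)
    (r : ℕ) (p α : Fin r → ℕ) (P : Fin r → Subgroup G)
    (hp : ∀ i, (p i).Prime) (hmono : StrictMono p) (hα : ∀ i, 1 ≤ α i)
    (hcard : Fintype.card G = ∏ i, p i ^ α i)
    (hP : ∀ i, Nat.card ↥(P i) = p i ^ α i)
    (x : G) (hx1 : x ≠ 1) (xc : Fin r → G) (hxc : ∀ i, xc i ∈ P i)
    (hxprod : x = (List.ofFn xc).prod) :
    (powerGraph G).degree x =
      orderOf x - Nat.totient (orderOf x) +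
        (∏ j ∈ Finset.univ.filter (fun j => xc j = 1), p j ^ α j) *
          Nat.card {y : G //
            (∃ yc : Fin r → G, (∀ i, yc i ∈ P i) ∧
              y = (List.ofFn (fun i => if xc i ≠ 1 then yc i else 1)).prod) ∧
            x ∈ Subgroup.zpowers y} - 1 := by
  classical
  haveI : ∀ i, Fintype (P i) := fun i => Fintype.ofFinite _
  haveI hpf : ∀ i, Fact (p i).Prime := fun i => ⟨hp i⟩
  have hGcard : Nat.card G = ∏ i, p i ^ α i := by rw [Nat.card_eq_fintype_card, hcard]
  have hpne : ∀ i j : Fin r, i ≠ j → p i ≠ p j := fun i j hij h => hij (hmono.injective h)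
  have hcop : Pairwise fun i j : Fin r => Nat.Coprime (Nat.card ↥(P i)) (Nat.card ↥(P j)) := by
    intro i j hij
    rw [hP i, hP j]
    exact ((Nat.coprime_primes (hp i) (hp j)).mpr (hpne i j hij)).pow _ _
  -- Normality of the P i
  have hnormal : ∀ i, (P i).Normal := by
    intro i
    have hidx : Nat.card ↥(P i) * (P i).index = Nat.card G := Subgroup.card_mul_index (P i)
    have hrest : (P i).index = ∏ j ∈ Finset.univ.erase i, p j ^ α j := by
      have h2 : p i ^ α i * (P i).index
          = p i ^ α i * ∏ j ∈ Finset.univ.erase i, p j ^ α j := by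
        rw [← hP i, hidx, hGcard,
          ← Finset.mul_prod_erase Finset.univ _ (Finset.mem_univ i), hP i]
      exact Nat.eq_of_mul_eq_mul_left (pow_pos (hp i).pos _) h2
    have hcopidx : Nat.Coprime (p i) ((P i).index) := by
      rw [hrest]
      exact Nat.Coprime.prod_right fun j hj =>
        (((Nat.coprime_primes (hp i) (hp j)).mpr
          (hpne i j (Ne.symm (Finset.mem_erase.mp hj).1))).pow_right _)
    have hnd : ¬ p i ∣ (P i).index := fun hd =>
      (hp i).one_lt.ne' (hcopidx.eq_one_of_dvd hd)
    have hpg : IsPGroup (p i) ↥(P i) := IsPGroup.of_card (hP i)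
    have h4 : ∀ (q : ℕ) (_ : Fact q.Prime) (Q : Sylow q G), (↑Q : Subgroup G).Normal :=
      ((isNilpotent_of_finite_tfae (G := G)).out 0 3).mp hnil
    have hnorm := h4 (p i) (hpf i) (hpg.toSylow hnd)
    simpa using hnorm
  -- Commuting
  have hcomm : Pairwise fun i j : Fin r => ∀ a b : G, a ∈ P i → b ∈ P j → Commute a b := by
    intro i j hij
    have hdisj : Disjoint (P i) (P j) := by
      rw [Subgroup.disjoint_def]
      intro g hgi hgj
      have h1 : orderOf g ∣ Nat.card ↥(P i) := by
        have := orderOf_dvd_natCard (⟨g, hgi⟩ : P i)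
        rw [← Subgroup.orderOf_coe] at this
        exact this
      have h2 : orderOf g ∣ Nat.card ↥(P j) := by
        have := orderOf_dvd_natCard (⟨g, hgj⟩ : P j)
        rw [← Subgroup.orderOf_coe] at this
        exact this
      have : orderOf g = 1 := Nat.eq_one_of_dvd_coprimes (hcop hij) h1 h2
      exact orderOf_eq_one_iff.mp this
    exact Subgroup.commute_of_normal_of_disjoint _ _ (hnormal i) (hnormal j) hdisj
  -- The isomorphism
  set Φ : (∀ i, ↥(P i)) →* G := Subgroup.noncommPiCoprod hcomm with hΦ
  have hcopF : Pairwise fun i j : Fin r =>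
      Nat.Coprime (Fintype.card ↥(P i)) (Fintype.card ↥(P j)) := by
    intro i j hij
    rw [← Nat.card_eq_fintype_card, ← Nat.card_eq_fintype_card]
    exact hcop hij
  have hΦinj : Function.Injective Φ :=
    Subgroup.injective_noncommPiCoprod_of_iSupIndep
      (Subgroup.independent_of_coprime_order hcomm hcopF)
  have hΦcard : Fintype.card (∀ i, ↥(P i)) = Fintype.card G := by
    rw [Fintype.card_pi, hcard]
    exact Finset.prod_congr rfl fun i _ => by rw [← Nat.card_eq_fintype_card, hP i]
  have hΦbij : Function.Bijective Φ :=
    (Fintype.bijective_iff_injective_and_card Φ).mpr ⟨hΦinj, hΦcard⟩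
  set e : (∀ i, ↥(P i)) ≃* G := MulEquiv.ofBijective Φ hΦbij with he
  have hΦ_apply : ∀ c : ∀ i, ↥(P i), e c = (List.ofFn fun i => ((c i : G))).prod := by
    intro c
    show Φ c = _
    rw [hΦ, Subgroup.noncommPiCoprod_apply]
    exact noncommProd_univ_fin_eq_ofFn _ _
  set xcp : ∀ i, ↥(P i) := fun i => ⟨xc i, hxc i⟩ with hxcp
  have hex : e xcp = x := by
    rw [hΦ_apply]
    exact hxprod.symm
  have hxcp1 : ∀ i, xc i = 1 → xcp i = 1 := fun i h => Subtype.ext h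
  -- key membership lemma
  have hkey : ∀ c : ∀ i, ↥(P i),
      (x ∈ Subgroup.zpowers (e c) ↔ ∀ i, xcp i ∈ Subgroup.zpowers (c i)) := by
    intro c
    rw [← hex]
    have h5 : e xcp ∈ Subgroup.zpowers (e c) ↔ xcp ∈ Subgroup.zpowers c := by
      simp only [Subgroup.mem_zpowers_iff]
      constructor
      · rintro ⟨k, hk⟩
        exact ⟨k, e.injective (by rw [map_zpow]; exact hk)⟩
      · rintro ⟨k, hk⟩
        exact ⟨k, by rw [← map_zpow, hk]⟩
    rw [h5, mem_zpowers_pi_iff hcop]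
  -- the equivalences
  set Q : (∀ i, ↥(P i)) → Prop := fun c => ∀ i, xcp i ∈ Subgroup.zpowers (c i) with hQ
  have equiv1 : {c : ∀ i, ↥(P i) // Q c} ≃ {y : G // x ∈ Subgroup.zpowers y} :=
    e.toEquiv.subtypeEquiv fun c => by rw [hQ]; exact (hkey c).symm
  have equiv2 : {c : ∀ i, ↥(P i) // (∀ i, xc i = 1 → c i = 1) ∧ Q c}
      ≃ {y : G //
          (∃ yc : Fin r → G, (∀ i, yc i ∈ P i) ∧
            y = (List.ofFn (fun i => if xc i ≠ 1 then yc i else 1)).prod) ∧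
          x ∈ Subgroup.zpowers y} := by
    refine e.toEquiv.subtypeEquiv fun c => ?_
    rw [hQ]
    constructor
    · rintro ⟨hsupp, hQc⟩
      refine ⟨⟨fun i => (c i : G), fun i => (c i).2, ?_⟩, (hkey c).mpr hQc⟩
      show e c = _
      rw [hΦ_apply]
      congr 1
      apply congrArg
      funext i
      by_cases h : xc i = 1
      · simp only [h, ne_eq, not_true_eq_false, if_false]
        rw [hsupp i h]
        rfl
      · simp only [ne_eq, h, not_false_eq_true, if_true]
    · rintro ⟨⟨yc, hyc, hform⟩, hzp⟩
      refine ⟨?_, (hkey c).mp hzp⟩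
      have hform' : e c = (List.ofFn (fun i => if xc i ≠ 1 then yc i else 1)).prod := hform
      have hc' : (fun i => if h : xc i = 1 then (1 : ↥(P i)) else ⟨yc i, hyc i⟩) = c := by
        apply e.injective
        rw [hΦ_apply, hform']
        congr 1
        apply congrArg
        funext i
        by_cases h : xc i = 1
        · simp [h]
        · simp [h]
      intro i h
      rw [← congrFun hc' i, dif_pos h]
  have equiv3 : {c : ∀ i, ↥(P i) // Q c}
      ≃ (∀ j : {j : Fin r // xc j = 1}, ↥(P j.1))
        × {c : ∀ i, ↥(P i) // (∀ i, xc i = 1 → c i = 1) ∧ Q c} := by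
    refine ⟨fun c => ⟨fun j => c.1 j.1,
      ⟨fun i => if xc i = 1 then 1 else c.1 i, fun i h => if_pos h, fun i => ?_⟩⟩,
      fun dc => ⟨fun i => if h : xc i = 1 then dc.1 ⟨i, h⟩ else dc.2.1 i, fun i => ?_⟩,
      fun c => ?_, fun dc => ?_⟩
    · show xcp i ∈ Subgroup.zpowers (if xc i = 1 then 1 else c.1 i)
      by_cases h : xc i = 1
      · rw [if_pos h, hxcp1 i h]
        exact Subgroup.one_mem _
      · rw [if_neg h]
        exact c.2 i
    · show xcp i ∈ Subgroup.zpowers (if h : xc i = 1 then dc.1 ⟨i, h⟩ else dc.2.1 i)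
      by_cases h : xc i = 1
      · rw [dif_pos h, hxcp1 i h]
        exact Subgroup.one_mem _
      · rw [dif_neg h]
        exact dc.2.2.2 i
    · apply Subtype.ext
      funext i
      by_cases h : xc i = 1
      · simp only [dif_pos h]
      · simp only [dif_neg h, if_neg h]
    · obtain ⟨d, c'⟩ := dc
      refine Prod.ext ?_ ?_
      · funext j
        simp only [dif_pos j.2]
      · apply Subtype.ext
        funext i
        by_cases h : xc i = 1
        · simp only [if_pos h]
          exact (c'.2.1 i h).symm
        · simp only [if_neg h, dif_neg h]
  -- cardinality computation
  have hAA : Nat.card {y : G // x ∈ Subgroup.zpowers y}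
      = (∏ j ∈ Finset.univ.filter (fun j => xc j = 1), p j ^ α j) *
          Nat.card {y : G //
            (∃ yc : Fin r → G, (∀ i, yc i ∈ P i) ∧
              y = (List.ofFn (fun i => if xc i ≠ 1 then yc i else 1)).prod) ∧
            x ∈ Subgroup.zpowers y} := by
    rw [← Nat.card_congr equiv1, Nat.card_congr equiv3, Nat.card_prod,
      ← Nat.card_congr equiv2]
    congr 1
    rw [Nat.card_pi]
    have h1 : ∀ a : {j : Fin r // xc j = 1}, Nat.card ↥(P a.1) = p a.1 ^ α a.1 :=
      fun a => hP a.1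
    rw [Finset.prod_congr rfl (fun a _ => h1 a)]
    exact (Finset.prod_subtype (Finset.univ.filter (fun j => xc j = 1))
      (fun j => by simp) (fun j => p j ^ α j)).symm
  have hdeg := degree_powerGraph_eq x
  have htot := Nat.totient_le (orderOf x)
  rw [hAA] at hdeg
  set D := (powerGraph G).degree x with hD
  set o := orderOf x with ho
  set t := Nat.totient o with ht
  set K := (∏ j ∈ Finset.univ.filter (fun j => xc j = 1), p j ^ α j) *
          Nat.card {y : G //
            (∃ yc : Fin r → G, (∀ i, yc i ∈ P i) ∧
              y = (List.ofFn (fun i => if xc i ≠ 1 then yc i else 1)).prod) ∧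
            x ∈ Subgroup.zpowers y} with hK
  clear_value D o t K
  clear * - hdeg htot
  omega
end

section
/- Let G be a finite nilpotent group of order n = p_1^{α_1} ··· p_r^{α_r} with distinct primes p_1 < ··· < p_r and Sylow subgroups P_1, ..., P_r. Let x ∈ G \ {e}, let M be a maximal cyclic subgroup of G containing x with |M| = p_1^{γ_1} ··· p_r^{γ_r} and o(x) = ∏_{i ∈ τ_x} p_i^{β_i}, where τ_x = { j : x_j ≠ e } in the Sylow decomposition x = x_1 ··· x_r, and set M_i = M ∩ P_i. Then deg(x) = o(x) − φ(o(x)) + (∏_{j ∈ [r] \ τ_x} p_j^{α_j}) · (∏_{i ∈ τ_x} (p_i^{γ_i} − p_i^{β_i − 1})) − 1 if and only if ∏_{i ∈ τ_x} M_i is the unique maximal cyclic subgroup of ∏_{i ∈ τ_x} P_i containing x. -/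
open Subgroup Finset
open scoped Classical
set_option linter.unusedSectionVars false
set_option linter.unusedVariables false
set_option maxHeartbeats 1000000

section Helpers
variable {G : Type*} [Group G] [Fintype G]

/-- A cyclic subgroup has a generator in `G`. -/
lemma exists_zpowers_eq (K : Subgroup G) (h : IsCyclic ↥K) : ∃ g : G, g ∈ K ∧ zpowers g = K := by
  obtain ⟨⟨g, hg⟩, hgen⟩ := h.exists_generator
  refine ⟨g, hg, le_antisymm (zpowers_le.2 hg) ?_⟩
  intro z hz
  obtain ⟨k, hk⟩ := hgen ⟨z, hz⟩
  exact ⟨k, by simpa using congrArg Subtype.val hk⟩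

lemma zpowers_isCyclic (g : G) : IsCyclic ↥(zpowers g) :=
  ⟨⟨g, mem_zpowers g⟩, fun x => by
    obtain ⟨k, hk⟩ := x.2
    exact ⟨k, Subtype.ext (by simpa using hk)⟩⟩

lemma ncard_congr_iff {q q' : G → Prop} (h : ∀ x, q x ↔ q' x) :
    Nat.card {y : G // q y} = Nat.card {y : G // q' y} :=
  Nat.card_congr (Equiv.subtypeEquivRight h)

lemma ncard_mem (N : Subgroup G) : Nat.card {y : G // y ∈ N} = Nat.card ↥N := rfl

lemma orderOf_dvd_card_subgroup {N : Subgroup G} {h : G} (hh : h ∈ N) :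
    orderOf h ∣ Nat.card ↥N :=
  Nat.card_zpowers h ▸ card_dvd_of_le (zpowers_le.2 hh)

lemma exists_nat_pow_of_mem_zpowers {g z : G} (hz : z ∈ zpowers g) : ∃ k : ℕ, g ^ k = z := by
  have := mem_powers_iff_mem_zpowers.2 hz
  obtain ⟨k, hk⟩ := this
  exact ⟨k, hk⟩

lemma mem_zpowers_pow_of {g z : G} {n : ℕ} (hn : n ∣ orderOf g) (hz : z ∈ zpowers g)
    (hzo : orderOf z ∣ n) : z ∈ zpowers (g ^ (orderOf g / n)) := by
  have hm : 0 < orderOf g := orderOf_pos g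
  have hn0 : 0 < n := Nat.pos_of_dvd_of_pos hn hm
  obtain ⟨k, hk⟩ := exists_nat_pow_of_mem_zpowers hz
  have h1 : g ^ (k * n) = 1 := by
    rw [pow_mul, hk]
    exact orderOf_dvd_iff_pow_eq_one.1 hzo
  have h2 : orderOf g ∣ k * n := orderOf_dvd_of_pow_eq_one h1
  obtain ⟨e, he⟩ : orderOf g / n ∣ k := by
    have hmeq : orderOf g = (orderOf g / n) * n := (Nat.div_mul_cancel hn).symm
    rw [hmeq] at h2
    exact (Nat.mul_dvd_mul_iff_right hn0).1 h2
  refine ⟨(e : ℤ), ?_⟩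
  show (g ^ (orderOf g / n)) ^ (e : ℤ) = z
  rw [zpow_natCast, ← pow_mul, ← he, hk]

lemma orderOf_pow_div (g : G) {n : ℕ} (hn : n ∣ orderOf g) :
    orderOf (g ^ (orderOf g / n)) = n := by
  have hm : 0 < orderOf g := orderOf_pos g
  have hn0 : 0 < n := Nat.pos_of_dvd_of_pos hn hm
  rw [orderOf_pow, Nat.gcd_eq_right (Nat.div_dvd_of_dvd hn),
    Nat.div_div_self hn hm.ne']

lemma subgroup_le_cyclic_eq {g : G} {N : Subgroup G} (hle : N ≤ zpowers g) :
    N = zpowers (g ^ (orderOf g / Nat.card ↥N)) := by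
  have ht : Nat.card ↥N ∣ orderOf g := Nat.card_zpowers g ▸ card_dvd_of_le hle
  refine eq_of_le_of_card_ge (fun z hz => mem_zpowers_pow_of ht (hle hz)
    (orderOf_dvd_card_subgroup hz)) ?_
  rw [Nat.card_zpowers, orderOf_pow_div g ht]

lemma mem_zpowers_of_orderOf_dvd {g x y : G} (hx : x ∈ zpowers g) (hy : y ∈ zpowers g)
    (hdvd : orderOf x ∣ orderOf y) : x ∈ zpowers y := by
  have h1 : zpowers y = zpowers (g ^ (orderOf g / Nat.card ↥(zpowers y))) :=
    subgroup_le_cyclic_eq (zpowers_le.2 hy)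
  rw [Nat.card_zpowers] at h1
  rw [h1]
  have hyd : orderOf y ∣ orderOf g := by
    have := card_dvd_of_le (zpowers_le.2 hy)
    rwa [Nat.card_zpowers, Nat.card_zpowers] at this
  exact mem_zpowers_pow_of hyd hx hdvd

lemma ncard_orderOf_dvd (g : G) {n : ℕ} (hn : n ∣ orderOf g) :
    Nat.card {z : G // z ∈ zpowers g ∧ orderOf z ∣ n} = n := by
  have heq : Nat.card {z : G // z ∈ zpowers g ∧ orderOf z ∣ n}
      = Nat.card {z : G // z ∈ zpowers (g ^ (orderOf g / n))} := by
    refine ncard_congr_iff fun z => ⟨fun ⟨hz, ho⟩ => mem_zpowers_pow_of hn hz ho, fun hz => ?_⟩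
    have h1 : zpowers (g ^ (orderOf g / n)) ≤ zpowers g := zpowers_le.2 ⟨_, zpow_natCast g _⟩
    refine ⟨h1 hz, ?_⟩
    have := orderOf_dvd_card_subgroup (N := zpowers (g ^ (orderOf g / n))) hz
    rwa [Nat.card_zpowers, orderOf_pow_div g hn] at this
  rw [heq, ncard_mem, Nat.card_zpowers, orderOf_pow_div g hn]

lemma mem_zpowers_mul_left {a b : G} (h : Commute a b)
    (hco : (orderOf a).Coprime (orderOf b)) : a ∈ zpowers (a * b) := by
  by_cases h1 : orderOf a = 1
  · simp [orderOf_eq_one_iff.1 h1, Subgroup.one_mem]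
  · have hlt : 1 < orderOf a := by have := orderOf_pos a; omega
    obtain ⟨c, -, hc⟩ := Nat.exists_mul_mod_eq_one_of_coprime hco.symm hlt
    refine ⟨((orderOf b * c : ℕ) : ℤ), ?_⟩
    show (a * b) ^ ((orderOf b * c : ℕ) : ℤ) = a
    rw [zpow_natCast, h.mul_pow, pow_mul b, pow_orderOf_eq_one, one_pow, mul_one,
      ← pow_mod_orderOf, hc, pow_one]

lemma mem_zpowers_mul_right {a b : G} (h : Commute a b)
    (hco : (orderOf a).Coprime (orderOf b)) : b ∈ zpowers (a * b) := by
  rw [h.eq]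
  exact mem_zpowers_mul_left h.symm hco.symm

lemma eq_one_of_mem_both {H K : Subgroup G}
    (hco : (Nat.card ↥H).Coprime (Nat.card ↥K)) {g : G} (hgH : g ∈ H) (hgK : g ∈ K) :
    g = 1 := by
  have h1 : orderOf g ∣ Nat.gcd (Nat.card ↥H) (Nat.card ↥K) :=
    Nat.dvd_gcd (orderOf_dvd_card_subgroup hgH) (orderOf_dvd_card_subgroup hgK)
  rw [hco] at h1
  exact orderOf_eq_one_iff.1 (Nat.dvd_one.1 h1)

lemma exists_mul_of_mem_sup {H K : Subgroup G}
    (hcomm : ∀ h ∈ H, ∀ k ∈ K, Commute h k) {y : G} (hy : y ∈ H ⊔ K) :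
    ∃ h ∈ H, ∃ k ∈ K, h * k = y := by
  rw [sup_eq_closure] at hy
  refine closure_induction ?_ ?_ ?_ ?_ hy
  · rintro z (hz | hz)
    · exact ⟨z, hz, 1, K.one_mem, mul_one z⟩
    · exact ⟨1, H.one_mem, z, hz, one_mul z⟩
  · exact ⟨1, H.one_mem, 1, K.one_mem, mul_one 1⟩
  · rintro _ _ _ _ ⟨h1, hh1, k1, hk1, rfl⟩ ⟨h2, hh2, k2, hk2, rfl⟩
    refine ⟨h1 * h2, H.mul_mem hh1 hh2, k1 * k2, K.mul_mem hk1 hk2, ?_⟩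
    have hc : Commute h2 k1 := hcomm h2 hh2 k1 hk1
    show h1 * h2 * (k1 * k2) = h1 * k1 * (h2 * k2)
    rw [mul_assoc h1 h2, ← mul_assoc h2 k1, hc.eq, mul_assoc k1 h2, ← mul_assoc h1 k1]
  · rintro _ _ ⟨h1, hh1, k1, hk1, rfl⟩
    refine ⟨h1⁻¹, H.inv_mem hh1, k1⁻¹, K.inv_mem hk1, ?_⟩
    have hc : Commute h1 k1 := hcomm h1 hh1 k1 hk1
    rw [mul_inv_rev, hc.inv_inv.eq]

lemma count_mul {H K : Subgroup G}
    (hcomm : ∀ h ∈ H, ∀ k ∈ K, Commute h k)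
    (hco : (Nat.card ↥H).Coprime (Nat.card ↥K))
    (Q Q1 Q2 : G → Prop)
    (hQ : ∀ h ∈ H, ∀ k ∈ K, (Q (h * k) ↔ Q1 h ∧ Q2 k)) :
    Nat.card {y : G // y ∈ H ⊔ K ∧ Q y}
      = Nat.card {h : G // h ∈ H ∧ Q1 h} * Nat.card {k : G // k ∈ K ∧ Q2 k} := by
  rw [← Nat.card_prod]
  symm
  apply Nat.card_congr
  refine Equiv.ofBijective
    (fun a => ⟨a.1.1 * a.2.1, mul_mem_sup a.1.2.1 a.2.2.1,
      (hQ a.1.1 a.1.2.1 a.2.1 a.2.2.1).2 ⟨a.1.2.2, a.2.2.2⟩⟩) ⟨?_, ?_⟩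
  · rintro ⟨⟨h1, hh1, hq1⟩, ⟨k1, hk1, hqk1⟩⟩ ⟨⟨h2, hh2, hq2⟩, ⟨k2, hk2, hqk2⟩⟩ heq
    have heq' : h1 * k1 = h2 * k2 := congrArg Subtype.val heq
    have e2 : h2⁻¹ * h1 = k2 * k1⁻¹ := by
      rw [inv_mul_eq_iff_eq_mul, ← mul_assoc, ← heq', mul_assoc, mul_inv_cancel, mul_one]
    have key : h2⁻¹ * h1 = 1 :=
      eq_one_of_mem_both hco (H.mul_mem (H.inv_mem hh2) hh1)
        (e2 ▸ K.mul_mem hk2 (K.inv_mem hk1))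
    have hhh : h1 = h2 := (inv_mul_eq_one.1 key).symm
    subst hhh
    have hkk : k1 = k2 := mul_left_cancel heq'
    subst hkk
    rfl
  · rintro ⟨y, hmem, hq⟩
    obtain ⟨h, hh, k, hk, rfl⟩ := exists_mul_of_mem_sup hcomm hmem
    obtain ⟨hq1, hq2⟩ := (hQ h hh k hk).1 hq
    exact ⟨⟨⟨h, hh, hq1⟩, ⟨k, hk, hq2⟩⟩, rfl⟩

end Helpers

section Helpers3
variable {G : Type*} [Group G] [Fintype G]
variable {r : ℕ} {p α : Fin r → ℕ} {P : Fin r → Subgroup G}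

lemma coprime_pow_prod (hp : ∀ i, (p i).Prime) (hinj : Function.Injective p)
    {a : Fin r} {S : Finset (Fin r)} (ha : a ∉ S) (e : ℕ) (f : Fin r → ℕ) :
    (p a ^ e).Coprime (∏ i ∈ S, p i ^ f i) :=
  Nat.Coprime.prod_right fun i hi =>
    Nat.Coprime.pow e (f i) <| (Nat.coprime_primes (hp a) (hp i)).2
      (fun hpe => ha (hinj hpe ▸ hi))

lemma pow_dvd_of_dvd_prod (hp : ∀ i, (p i).Prime) (hinj : Function.Injective p)
    {i : Fin r} {S : Finset (Fin r)} (hi : i ∈ S) {c e : ℕ} (hc : c ∣ p i ^ e)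
    (f : Fin r → ℕ) (hdvd : c ∣ ∏ j ∈ S, p j ^ f j) : c ∣ p i ^ f i := by
  rw [← Finset.mul_prod_erase S _ hi] at hdvd
  obtain ⟨k, hk, rfl⟩ := (Nat.dvd_prime_pow (hp i)).1 hc
  exact ((coprime_pow_prod hp hinj (Finset.notMem_erase i S) k f)).dvd_of_dvd_mul_right hdvd

lemma P_commute (hp : ∀ i, (p i).Prime) (hinj : Function.Injective p)
    (hPcard : ∀ i, Nat.card ↥(P i) = p i ^ α i) (hPnorm : ∀ i, (P i).Normal)
    {i j : Fin r} (hij : i ≠ j) {a b : G} (ha : a ∈ P i) (hb : b ∈ P j) : Commute a b := by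
  refine Subgroup.commute_of_normal_of_disjoint _ _ (hPnorm i) (hPnorm j) ?_ a b ha hb
  rw [Subgroup.disjoint_def]
  intro g hg1 hg2
  refine eq_one_of_mem_both ?_ hg1 hg2
  rw [hPcard i, hPcard j]
  exact Nat.Coprime.pow _ _ ((Nat.coprime_primes (hp i) (hp j)).2 fun h => hij (hinj h))

lemma count_iSup (hp : ∀ i, (p i).Prime) (hinj : Function.Injective p)
    (hPcard : ∀ i, Nat.card ↥(P i) = p i ^ α i) (hPnorm : ∀ i, (P i).Normal)
    {N : Fin r → Subgroup G} (hN : ∀ i, N i ≤ P i)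
    (d : Fin r → ℕ) (S : Finset (Fin r)) (hd : ∀ i ∈ S, d i ∣ p i ^ α i) :
    Nat.card ↥(⨆ i ∈ S, N i) = ∏ i ∈ S, Nat.card ↥(N i) ∧
    Nat.card {y : G // y ∈ (⨆ i ∈ S, N i) ∧ (∏ i ∈ S, d i) ∣ orderOf y}
      = ∏ i ∈ S, Nat.card {h : G // h ∈ N i ∧ d i ∣ orderOf h} := by
  classical
  induction S using Finset.induction_on with
  | empty =>
    constructor
    · simp
    · have h1 : Nat.card {y : G // y ∈ (⨆ i ∈ (∅ : Finset (Fin r)), N i) ∧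
          (∏ i ∈ (∅ : Finset (Fin r)), d i) ∣ orderOf y}
          = Nat.card {y : G // y = 1} :=
        ncard_congr_iff fun y => by simp [Subgroup.mem_bot]
      rw [h1]
      haveI : Unique {y : G // y = 1} := ⟨⟨⟨1, rfl⟩⟩, fun a => Subtype.ext a.2⟩
      simp [Nat.card_unique]
  | @insert a S' haS ih =>
    obtain ⟨ihc, ihf⟩ := ih (fun i hi => hd i (Finset.mem_insert_of_mem hi))
    have hcardNa : Nat.card ↥(N a) ∣ p a ^ α a := (hPcard a) ▸ Subgroup.card_dvd_of_le (hN a)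
    have hcardK : Nat.card ↥(⨆ i ∈ S', N i) ∣ ∏ i ∈ S', p i ^ α i := by
      rw [ihc]
      exact Finset.prod_dvd_prod_of_dvd _ _ fun i hi =>
        (hPcard i) ▸ Subgroup.card_dvd_of_le (hN i)
    have hcomm : ∀ h ∈ N a, ∀ k ∈ ⨆ i ∈ S', N i, Commute h k := by
      intro h hh k hk
      have hle : (⨆ i ∈ S', N i) ≤ Subgroup.centralizer (N a : Set G) := by
        refine iSup_le fun i => iSup_le fun hi => ?_
        intro b hb
        rw [Subgroup.mem_centralizer_iff]
        intro g hg
        exact P_commute hp hinj hPcard hPnorm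
          (fun (hai : a = i) => haS (by rw [hai]; exact hi)) (hN a hg) (hN i hb)
      exact Subgroup.mem_centralizer_iff.1 (hle hk) h hh
    have hco : (Nat.card ↥(N a)).Coprime (Nat.card ↥(⨆ i ∈ S', N i)) :=
      ((coprime_pow_prod hp hinj haS (α a) α).coprime_dvd_right hcardK).coprime_dvd_left hcardNa
    rw [Finset.iSup_insert, Finset.prod_insert haS, Finset.prod_insert haS,
      Finset.prod_insert haS]
    constructor
    · have hclm := count_mul hcomm hco (fun _ => True) (fun _ => True) (fun _ => True)
        (fun _ _ _ _ => by simp)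
      calc Nat.card ↥(N a ⊔ ⨆ i ∈ S', N i)
          = Nat.card {y : G // y ∈ (N a ⊔ ⨆ i ∈ S', N i) ∧ True} :=
            (ncard_congr_iff fun y => by simp)
        _ = Nat.card {h : G // h ∈ N a ∧ True} *
              Nat.card {k : G // k ∈ (⨆ i ∈ S', N i) ∧ True} := hclm
        _ = Nat.card ↥(N a) * Nat.card ↥(⨆ i ∈ S', N i) := by
            congr 1
            · exact ncard_congr_iff fun y => by simp
            · exact ncard_congr_iff fun y => by simp
        _ = Nat.card ↥(N a) * ∏ i ∈ S', Nat.card ↥(N i) := by rw [ihc]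
    · have h2 := count_mul hcomm hco
        (fun y => (d a * ∏ i ∈ S', d i) ∣ orderOf y)
        (fun h => d a ∣ orderOf h)
        (fun k => (∏ i ∈ S', d i) ∣ orderOf k) ?_
      · exact h2.trans (by rw [ihf])
      · intro h hh k hk
        have hoh : orderOf h ∣ p a ^ α a := (orderOf_dvd_card_subgroup hh).trans hcardNa
        have hok : orderOf k ∣ ∏ i ∈ S', p i ^ α i :=
          (orderOf_dvd_card_subgroup hk).trans hcardK
        have hcop : (orderOf h).Coprime (orderOf k) :=
          (((coprime_pow_prod hp hinj haS (α a) α).coprime_dvd_right hok).coprime_dvd_left hoh)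
        have hmul : orderOf (h * k) = orderOf h * orderOf k :=
          (hcomm h hh k hk).orderOf_mul_eq_mul_orderOf_of_coprime hcop
        have hda : (d a).Coprime (orderOf k) :=
          ((coprime_pow_prod hp hinj haS (α a) α).coprime_dvd_right hok).coprime_dvd_left
            (hd a (Finset.mem_insert_self a S'))
        have hD : (∏ i ∈ S', d i).Coprime (orderOf h) := by
          have h1 : (∏ i ∈ S', d i) ∣ ∏ i ∈ S', p i ^ α i :=
            Finset.prod_dvd_prod_of_dvd _ _ fun i hi => hd i (Finset.mem_insert_of_mem hi)
          exact (((coprime_pow_prod hp hinj haS (α a) α).symm.coprime_dvd_right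
            hoh).coprime_dvd_left h1)
        show (d a * ∏ i ∈ S', d i) ∣ orderOf (h * k) ↔
          (d a ∣ orderOf h) ∧ ((∏ i ∈ S', d i) ∣ orderOf k)
        rw [hmul]
        constructor
        · intro hdvd
          exact ⟨hda.dvd_of_dvd_mul_right ((dvd_mul_right (d a) _).trans hdvd),
            hD.dvd_of_dvd_mul_left ((dvd_mul_left _ (d a)).trans hdvd)⟩
        · rintro ⟨h1, h2⟩
          exact mul_dvd_mul h1 h2

end Helpers3

section Helpers4
variable {G : Type*} [Group G] [Fintype G]

lemma ncard_eq_filter_card {β : Type*} [Fintype β] (q : β → Prop) [DecidablePred q] :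
    Nat.card {y : β // q y} = (univ.filter q).card := by
  rw [Nat.card_eq_fintype_card, Fintype.card_subtype]

lemma ncard_and_add (q D : G → Prop) :
    Nat.card {y : G // q y ∧ D y} + Nat.card {y : G // q y ∧ ¬ D y}
      = Nat.card {y : G // q y} := by
  classical
  rw [ncard_eq_filter_card, ncard_eq_filter_card, ncard_eq_filter_card]
  rw [← Finset.filter_filter, ← Finset.filter_filter]
  exact Finset.card_filter_add_card_filter_not _

lemma pow_gcd_mem {K : Subgroup G} {g : G} {a b : ℕ} (ha : g ^ a ∈ K) (hb : g ^ b ∈ K) :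
    g ^ Nat.gcd a b ∈ K := by
  have h1 : g ^ ((Nat.gcd a b : ℤ)) = (g ^ (a : ℤ)) ^ Nat.gcdA a b * (g ^ (b : ℤ)) ^ Nat.gcdB a b := by
    rw [← zpow_mul, ← zpow_mul, ← zpow_add, ← Nat.gcd_eq_gcd_ab]
  have h2 : g ^ ((Nat.gcd a b : ℤ)) ∈ K := by
    rw [h1]
    refine K.mul_mem (K.zpow_mem ?_ _) (K.zpow_mem ?_ _)
    · rw [zpow_natCast]; exact ha
    · rw [zpow_natCast]; exact hb
  rwa [zpow_natCast] at h2

lemma ncard_gen (x : G) :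
    Nat.card {y : G // y ∈ zpowers x ∧ x ∈ zpowers y} = (orderOf x).totient := by
  classical
  have e1 : ∀ y, (y ∈ zpowers x ∧ x ∈ zpowers y) ↔ (y ∈ zpowers x ∧ orderOf y = orderOf x) := by
    intro y
    refine and_congr_right fun hy => ⟨fun hx => ?_, fun ho => ?_⟩
    · refine Nat.dvd_antisymm ?_ ?_
      · have := card_dvd_of_le (zpowers_le.2 hy)
        rwa [Nat.card_zpowers, Nat.card_zpowers] at this
      · have := card_dvd_of_le (zpowers_le.2 hx)
        rwa [Nat.card_zpowers, Nat.card_zpowers] at this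
    · exact mem_zpowers_of_orderOf_dvd (mem_zpowers x) hy (by rw [ho])
  rw [ncard_congr_iff e1]
  haveI : IsCyclic ↥(zpowers x) := zpowers_isCyclic x
  have e2 : Nat.card {y : G // y ∈ zpowers x ∧ orderOf y = orderOf x}
      = Nat.card {z : ↥(zpowers x) // orderOf z = orderOf x} := by
    refine Nat.card_congr ⟨fun y => ⟨⟨y.1, y.2.1⟩, ?_⟩, fun z => ⟨z.1.1, z.1.2, ?_⟩, ?_, ?_⟩
    · rw [← orderOf_coe]; exact y.2.2
    · rw [orderOf_coe]; exact z.2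
    · intro y; rfl
    · intro z; rfl
  rw [e2]
  have hd : orderOf x ∣ Fintype.card ↥(zpowers x) := by
    rw [← Nat.card_eq_fintype_card, Nat.card_zpowers]
  have hcyc := IsCyclic.card_orderOf_eq_totient (α := ↥(zpowers x)) hd
  rw [ncard_eq_filter_card]
  exact hcyc

lemma degree_eq (x : G) :
    (powerGraph G).degree x + 1 + (orderOf x).totient
      = orderOf x + Nat.card {y : G // x ∈ zpowers y} := by
  classical
  have hpow : ∀ a b : G, (∃ k : ℕ, 0 < k ∧ a = b ^ k) ↔ a ∈ zpowers b := by
    intro a b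
    constructor
    · rintro ⟨k, hk, rfl⟩
      exact ⟨(k : ℤ), (zpow_natCast b k)⟩
    · intro ha
      obtain ⟨k, hk⟩ := exists_nat_pow_of_mem_zpowers ha
      rcases Nat.eq_zero_or_pos k with rfl | hpos
      · exact ⟨orderOf b, orderOf_pos b, by rw [pow_orderOf_eq_one]; simpa using hk.symm⟩
      · exact ⟨k, hpos, hk.symm⟩
  have adj : ∀ y, (powerGraph G).Adj x y ↔ x ≠ y ∧ (y ∈ zpowers x ∨ x ∈ zpowers y) := by
    intro y
    show (x ≠ y ∧ _) ↔ _
    refine and_congr_right fun _ => ?_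
    rw [hpow x y, hpow y x, or_comm]
  have hnf : (powerGraph G).neighborFinset x
      = (univ.filter fun y => y ∈ zpowers x ∨ x ∈ zpowers y).erase x := by
    ext y
    simp only [SimpleGraph.mem_neighborFinset, Finset.mem_erase, mem_filter, mem_univ, true_and]
    rw [adj y]
    exact ⟨fun ⟨h1, h2⟩ => ⟨Ne.symm h1, h2⟩, fun ⟨h1, h2⟩ => ⟨Ne.symm h1, h2⟩⟩
  have hx_mem : x ∈ univ.filter fun y : G => y ∈ zpowers x ∨ x ∈ zpowers y := by
    simp [mem_zpowers x]
  have hcard : (powerGraph G).degree x + 1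
      = (univ.filter fun y : G => y ∈ zpowers x ∨ x ∈ zpowers y).card := by
    rw [SimpleGraph.degree, hnf]
    exact Finset.card_erase_add_one hx_mem
  have hsplit : (univ.filter fun y : G => y ∈ zpowers x ∨ x ∈ zpowers y).card
      + (univ.filter fun y : G => y ∈ zpowers x ∧ x ∈ zpowers y).card
      = (univ.filter fun y : G => y ∈ zpowers x).card
        + (univ.filter fun y : G => x ∈ zpowers y).card := by
    rw [Finset.filter_or, Finset.filter_and]
    exact Finset.card_union_add_card_inter _ _
  have h1 : (univ.filter fun y : G => y ∈ zpowers x).card = orderOf x := by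
    rw [← ncard_eq_filter_card, ncard_mem, Nat.card_zpowers]
  have h2 : (univ.filter fun y : G => x ∈ zpowers y).card
      = Nat.card {y : G // x ∈ zpowers y} := (ncard_eq_filter_card _).symm
  have h3 : (univ.filter fun y : G => y ∈ zpowers x ∧ x ∈ zpowers y).card
      = (orderOf x).totient := by
    rw [← ncard_eq_filter_card]
    exact ncard_gen x
  omega

lemma exists_isMaximalCyclicIn (Hs : Subgroup G) (C : Subgroup G)
    (hC : IsCyclic ↥C) (hCH : C ≤ Hs) : ∃ K, IsMaximalCyclicIn Hs K ∧ C ≤ K := by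
  classical
  suffices H : ∀ n (C : Subgroup G), IsCyclic ↥C → C ≤ Hs →
      Nat.card ↥Hs - Nat.card ↥C = n → ∃ K, IsMaximalCyclicIn Hs K ∧ C ≤ K by
    exact H _ C hC hCH rfl
  intro n
  induction n using Nat.strong_induction_on with
  | _ n ih =>
    intro C hC hCH hn
    by_cases hmax : ∀ Nb : Subgroup G, IsCyclic ↥Nb → Nb ≤ Hs → C ≤ Nb → C = Nb
    · exact ⟨C, ⟨hC, hCH, hmax⟩, le_rfl⟩
    · push_neg at hmax
      obtain ⟨Nb, hNc, hNH, hCN, hne⟩ := hmax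
      have hlt : Nat.card ↥C < Nat.card ↥Nb := by
        refine lt_of_le_of_ne (Nat.le_of_dvd Nat.card_pos (card_dvd_of_le hCN)) ?_
        intro he
        exact hne (eq_of_le_of_card_ge hCN (le_of_eq he.symm))
      have hle2 : Nat.card ↥Nb ≤ Nat.card ↥Hs :=
        Nat.le_of_dvd Nat.card_pos (card_dvd_of_le hNH)
      have hCpos : 0 < Nat.card ↥C := Nat.card_pos
      obtain ⟨K, hK, hNK⟩ := ih (Nat.card ↥Hs - Nat.card ↥Nb) (by omega) Nb hNc hNH rfl
      exact ⟨K, hK, hCN.trans hNK⟩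

end Helpers4


open scoped Classical in
/-- Equality case of the degree lower bound: equality holds iff `∏_{i ∈ τ_x} M_i` is the
unique maximal cyclic subgroup of `∏_{i ∈ τ_x} P_i` containing `x`, where `M_i = M ⊓ P_i`. -/
theorem degree_lower_bound_equality_iff
    {G : Type*} [Group G] [Fintype G] (hnil : Group.IsNilpotent G)
    (r : ℕ) (p α : Fin r → ℕ) (P : Fin r → Subgroup G)
    (hp : ∀ i, (p i).Prime) (hmono : StrictMono p) (hα : ∀ i, 1 ≤ α i)
    (hcard : Fintype.card G = ∏ i, p i ^ α i)
    (hP : ∀ i, Nat.card ↥(P i) = p i ^ α i)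
    (x : G) (hx1 : x ≠ 1) (xc : Fin r → G) (hxc : ∀ i, xc i ∈ P i)
    (hxprod : x = (List.ofFn xc).prod)
    (M : Subgroup G) (hM : IsMaximalCyclic M) (hxM : x ∈ M)
    (γ β : Fin r → ℕ)
    (hγ : ∀ j, 1 ≤ γ j ∧ γ j ≤ α j)
    (hMcard : Nat.card ↥M = ∏ j, p j ^ γ j)
    (hβ : ∀ i, xc i ≠ 1 → 1 ≤ β i ∧ β i ≤ γ i)
    (hord : orderOf x = ∏ i ∈ Finset.univ.filter (fun i => xc i ≠ 1), p i ^ β i) :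
    ((powerGraph G).degree x =
        orderOf x - Nat.totient (orderOf x) +
          (∏ j ∈ Finset.univ.filter (fun j => xc j = 1), p j ^ α j) *
            (∏ i ∈ Finset.univ.filter (fun i => xc i ≠ 1), (p i ^ γ i - p i ^ (β i - 1))) -
          1) ↔
      (IsMaximalCyclicIn (⨆ i ∈ Finset.univ.filter (fun i => xc i ≠ 1), P i)
          (⨆ i ∈ Finset.univ.filter (fun i => xc i ≠ 1), (M ⊓ P i)) ∧
        (x ∈ (⨆ i ∈ Finset.univ.filter (fun i => xc i ≠ 1), (M ⊓ P i) : Subgroup G)) ∧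
        (∀ K : Subgroup G,
          IsMaximalCyclicIn (⨆ i ∈ Finset.univ.filter (fun i => xc i ≠ 1), P i) K →
          x ∈ K → K = ⨆ i ∈ Finset.univ.filter (fun i => xc i ≠ 1), (M ⊓ P i))) := by

  have hinj : Function.Injective p := hmono.injective
  have hNatCardG : Nat.card G = ∏ i, p i ^ α i := by
    rw [Nat.card_eq_fintype_card, hcard]
  -- Each `P i` is normal (it is a Sylow subgroup of a nilpotent group).
  have hPnorm : ∀ i, (P i).Normal := by
    intro i
    haveI : Fact (p i).Prime := ⟨hp i⟩
    have hne : ∀ j : Fin r, p j ^ α j ≠ 0 := fun j => pow_ne_zero _ (hp j).pos.ne'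
    have hfact : (Nat.card G).factorization (p i) = α i := by
      rw [hNatCardG, ← Finset.mul_prod_erase univ _ (mem_univ i),
        Nat.factorization_mul (hne i) (Finset.prod_ne_zero_iff.2 fun j _ => hne j),
        (hp i).factorization_pow]
      have hcop : (p i ^ 1).Coprime (∏ j ∈ univ.erase i, p j ^ α j) :=
        coprime_pow_prod hp hinj (Finset.notMem_erase i univ) 1 α
      rw [pow_one] at hcop
      have hzero : (∏ j ∈ univ.erase i, p j ^ α j).factorization (p i) = 0 :=
        Nat.factorization_eq_zero_of_not_dvd (((hp i).coprime_iff_not_dvd).1 hcop)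
      simp [hzero]
    have hs : Nat.card ↥(P i) = p i ^ (Nat.card G).factorization (p i) := by
      rw [hP i, hfact]
    have htfae := (isNilpotent_of_finite_tfae (G := G)).out 0 3
    exact (htfae.mp hnil) (p i) ⟨hp i⟩ (Sylow.ofCard (P i) hs)
  set τ : Finset (Fin r) := univ.filter (fun i => xc i ≠ 1) with hτdef
  set τ'' : Finset (Fin r) := univ.filter (fun j => xc j = 1) with hτ'def
  -- every element of `p i`-power order lies in `P i`
  have memP : ∀ (i : Fin r) (u : G) (k : ℕ), orderOf u = p i ^ k → u ∈ P i := by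
    intro i u k hu
    haveI : Fact (p i).Prime := ⟨hp i⟩
    haveI := hPnorm i
    have h1 : IsPGroup (p i) ↥(zpowers u) :=
      IsPGroup.of_card (by rw [Nat.card_zpowers, hu])
    have h2 : IsPGroup (p i) ↥(P i) := IsPGroup.of_card (hP i)
    have h3 : IsPGroup (p i) ↥(zpowers u ⊔ P i) := h1.to_sup_of_normal_right h2
    obtain ⟨e, he⟩ := IsPGroup.iff_card.1 h3
    have h4 : p i ^ e ∣ ∏ j, p j ^ α j := by
      rw [← he, ← hNatCardG]
      exact Subgroup.card_subgroup_dvd_card _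
    have h5 : p i ^ e ∣ p i ^ α i :=
      pow_dvd_of_dvd_prod hp hinj (mem_univ i) (dvd_refl (p i ^ e)) α h4
    have h6 : Nat.card ↥(zpowers u ⊔ P i) ≤ Nat.card ↥(P i) := by
      rw [he, hP i]
      exact Nat.le_of_dvd (pow_pos (hp i).pos _) h5
    have h7 : P i = zpowers u ⊔ P i := eq_of_le_of_card_ge le_sup_right h6
    rw [h7]
    exact (le_sup_left : zpowers u ≤ _) (mem_zpowers u)
  -- generator of M
  obtain ⟨gm, hgmM, hgmz⟩ := exists_zpowers_eq M hM.1
  have hordgm : orderOf gm = Nat.card ↥M := by rw [← hgmz, Nat.card_zpowers]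
  -- M ⊓ P i is cyclic of order p i ^ γ i
  have hMP : ∀ i : Fin r, ∃ u : G, M ⊓ P i = zpowers u ∧ orderOf u = p i ^ γ i := by
    intro i
    have hti : p i ^ γ i ∣ orderOf gm := by
      rw [hordgm, hMcard]
      exact Finset.dvd_prod_of_mem _ (mem_univ i)
    set u := gm ^ (orderOf gm / p i ^ γ i) with hudef
    have hou : orderOf u = p i ^ γ i := orderOf_pow_div gm hti
    have huM : u ∈ M := M.pow_mem hgmM _
    have huP : u ∈ P i := memP i u (γ i) hou
    have hzle : zpowers u ≤ M ⊓ P i := zpowers_le.2 ⟨huM, huP⟩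
    have hled : p i ^ γ i ∣ Nat.card ↥(M ⊓ P i) := by
      rw [← hou, ← Nat.card_zpowers]
      exact card_dvd_of_le hzle
    have hupper : Nat.card ↥(M ⊓ P i) ∣ p i ^ γ i := by
      have hdM : Nat.card ↥(M ⊓ P i) ∣ ∏ j, p j ^ γ j := by
        rw [← hMcard]; exact card_dvd_of_le inf_le_left
      have hdP : Nat.card ↥(M ⊓ P i) ∣ p i ^ α i := by
        rw [← hP i]; exact card_dvd_of_le inf_le_right
      exact pow_dvd_of_dvd_prod hp hinj (mem_univ i) hdP γ hdM
    have hcardMP : Nat.card ↥(M ⊓ P i) = p i ^ γ i := Nat.dvd_antisymm hupper hled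
    refine ⟨u, ?_, hou⟩
    refine (eq_of_le_of_card_ge hzle ?_).symm
    rw [Nat.card_zpowers, hou, hcardMP]
  have hMPcard : ∀ i : Fin r, Nat.card ↥(M ⊓ P i) = p i ^ γ i := by
    intro i
    obtain ⟨u, hu1, hu2⟩ := hMP i
    rw [hu1, Nat.card_zpowers, hu2]
  -- abbreviations
  set Hτ : Subgroup G := ⨆ i ∈ τ, P i with hHτdef
  set Hτ' : Subgroup G := ⨆ i ∈ τ'', P i with hHτ'def
  set Mτ : Subgroup G := ⨆ i ∈ τ, (M ⊓ P i) with hMτdef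
  set Mτ' : Subgroup G := ⨆ i ∈ τ'', (M ⊓ P i) with hMτ'def
  have hMPle : ∀ i : Fin r, M ⊓ P i ≤ P i := fun i => inf_le_right
  -- cards of the four sups
  obtain ⟨cHτ, -⟩ := count_iSup hp hinj hP hPnorm (fun i => le_refl (P i))
    (fun _ => 1) τ (fun i _ => one_dvd _)
  obtain ⟨cHτ', -⟩ := count_iSup hp hinj hP hPnorm (fun i => le_refl (P i))
    (fun _ => 1) τ'' (fun i _ => one_dvd _)
  obtain ⟨cMτ', -⟩ := count_iSup hp hinj hP hPnorm hMPle (fun _ => 1) τ'' (fun i _ => one_dvd _)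
  have hdβ : ∀ i ∈ τ, p i ^ β i ∣ p i ^ α i := by
    intro i hi
    rw [hτdef, Finset.mem_filter] at hi
    exact pow_dvd_pow _ ((hβ i hi.2).2.trans (hγ i).2)
  obtain ⟨cMτ, countMτ⟩ := count_iSup hp hinj hP hPnorm hMPle (fun i => p i ^ β i) τ hdβ
  rw [Finset.prod_congr rfl (fun i _ => hP i)] at cHτ cHτ'
  rw [Finset.prod_congr rfl (fun i _ => hMPcard i)] at cMτ cMτ'
  -- membership facts for τ
  have hmemτ : ∀ i, i ∈ τ ↔ xc i ≠ 1 := fun i => by rw [hτdef]; simp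
  have hmemτ' : ∀ i, i ∈ τ'' ↔ xc i = 1 := fun i => by rw [hτ'def]; simp
  have hdisj : Disjoint τ τ'' := by
    rw [Finset.disjoint_left]
    intro a ha ha'
    exact (hmemτ a).1 ha ((hmemτ' a).1 ha')
  have hunion : τ ∪ τ'' = univ := by
    ext i
    simp only [Finset.mem_union, hmemτ, hmemτ', mem_univ, iff_true]
    exact ne_or_eq _ _
  -- x ∈ Hτ
  have hxHτ : x ∈ Hτ := by
    rw [hxprod]
    refine Subgroup.list_prod_mem _ ?_
    intro z hz
    obtain ⟨i, hi⟩ := List.mem_ofFn.1 hz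
    by_cases hzi : xc i = 1
    · rw [← hi, hzi]; exact Hτ.one_mem
    · have hle : P i ≤ Hτ := le_iSup_of_le i (le_iSup_of_le ((hmemτ i).2 hzi) le_rfl)
      exact hle (hi ▸ hxc i)
  have hMτleM : Mτ ≤ M := iSup_le fun i => iSup_le fun _ => inf_le_left
  have hMτ'leM : Mτ' ≤ M := iSup_le fun i => iSup_le fun _ => inf_le_left
  have hMτleHτ : Mτ ≤ Hτ := by
    refine iSup_le fun i => iSup_le fun hi => ?_
    exact le_trans inf_le_right (le_iSup_of_le i (le_iSup_of_le hi le_rfl))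
  have hMτ'leHτ' : Mτ' ≤ Hτ' := by
    refine iSup_le fun i => iSup_le fun hi => ?_
    exact le_trans inf_le_right (le_iSup_of_le i (le_iSup_of_le hi le_rfl))
  have hm_split : Nat.card ↥M = (∏ i ∈ τ, p i ^ γ i) * (∏ i ∈ τ'', p i ^ γ i) := by
    rw [hMcard, ← hunion, Finset.prod_union hdisj]
  have hcoprime_prods : ∀ (e f : Fin r → ℕ),
      (∏ i ∈ τ, p i ^ e i).Coprime (∏ i ∈ τ'', p i ^ f i) := by
    intro e f
    refine Nat.Coprime.prod_left fun i hi => ?_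
    refine coprime_pow_prod hp hinj ?_ _ _
    intro hiτ'
    exact (hmemτ i).1 hi ((hmemτ' i).1 hiτ')
  have hMτlegm : Mτ ≤ zpowers gm := le_trans hMτleM (le_of_eq hgmz.symm)
  have hMτ'legm : Mτ' ≤ zpowers gm := le_trans hMτ'leM (le_of_eq hgmz.symm)
  have hMτz : Mτ = zpowers (gm ^ (orderOf gm / Nat.card ↥Mτ)) := subgroup_le_cyclic_eq hMτlegm
  have hMτ'z : Mτ' = zpowers (gm ^ (orderOf gm / Nat.card ↥Mτ')) :=
    subgroup_le_cyclic_eq hMτ'legm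
  have htdvd : Nat.card ↥Mτ ∣ orderOf gm := by
    rw [hordgm]; exact card_dvd_of_le hMτleM
  have ht'dvd : Nat.card ↥Mτ' ∣ orderOf gm := by
    rw [hordgm]; exact card_dvd_of_le hMτ'leM
  have hxgm : x ∈ zpowers gm := by rw [hgmz]; exact hxM
  have hxord_dvd_t : orderOf x ∣ Nat.card ↥Mτ := by
    rw [hord, cMτ]
    exact Finset.prod_dvd_prod_of_dvd _ _ fun i hi => pow_dvd_pow _ (hβ i ((hmemτ i).1 hi)).2
  have hxMτ : x ∈ Mτ := by
    rw [hMτz]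
    exact mem_zpowers_pow_of htdvd hxgm hxord_dvd_t
  -- elements of Hτ and Hτ' commute
  have hcommττ' : ∀ h ∈ Hτ, ∀ k ∈ Hτ', Commute h k := by
    intro h hh k hk
    have step1 : ∀ j ∈ τ'', h ∈ Subgroup.centralizer (P j : Set G) := by
      intro j hj
      have hle : Hτ ≤ Subgroup.centralizer (P j : Set G) := by
        refine iSup_le fun i => iSup_le fun hi => ?_
        intro b hb
        rw [Subgroup.mem_centralizer_iff]
        intro g hg
        have hne : j ≠ i := by
          intro he
          exact (hmemτ i).1 hi (he ▸ (hmemτ' j).1 hj)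
        exact P_commute hp hinj hP hPnorm hne hg hb
      exact hle hh
    have step2 : Hτ' ≤ Subgroup.centralizer ({h} : Set G) := by
      refine iSup_le fun j => iSup_le fun hj => ?_
      intro b hb
      rw [Subgroup.mem_centralizer_iff]
      intro g hg
      rw [Set.mem_singleton_iff] at hg
      subst hg
      exact (Subgroup.mem_centralizer_iff.1 (step1 j hj) b hb).symm
    exact Subgroup.mem_centralizer_iff.1 (step2 hk) h (Set.mem_singleton h)
  have hcoHH : (Nat.card ↥Hτ).Coprime (Nat.card ↥Hτ') := by
    rw [cHτ, cHτ']; exact hcoprime_prods α α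
  have htop : Hτ ⊔ Hτ' = ⊤ := by
    have h1 : Hτ ⊔ Hτ' = ⨆ i ∈ τ ∪ τ'', P i := (Finset.iSup_union).symm
    obtain ⟨cU, -⟩ := count_iSup hp hinj hP hPnorm (fun i => le_refl (P i))
      (fun _ => 1) (τ ∪ τ'') (fun i _ => one_dvd _)
    apply Subgroup.eq_top_of_card_eq
    rw [h1, cU, hNatCardG, ← hunion]
    exact Finset.prod_congr rfl fun i _ => hP i
  -- M is the join of its τ and τ'' parts
  have horder_split : orderOf gm = Nat.card ↥Mτ * Nat.card ↥Mτ' := by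
    rw [hordgm, hm_split, cMτ, cMτ']
  have hMτpos : 0 < Nat.card ↥Mτ := Nat.card_pos
  have hMτ'pos : 0 < Nat.card ↥Mτ' := Nat.card_pos
  have hdivt : orderOf gm / Nat.card ↥Mτ = Nat.card ↥Mτ' := by
    rw [horder_split, Nat.mul_div_cancel_left _ hMτpos]
  have hdivt' : orderOf gm / Nat.card ↥Mτ' = Nat.card ↥Mτ := by
    rw [horder_split, Nat.mul_div_cancel _ hMτ'pos]
  have hMsup : M = Mτ ⊔ Mτ' := by
    refine le_antisymm ?_ (sup_le hMτleM hMτ'leM)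
    rw [← hgmz]
    refine zpowers_le.2 ?_
    have h1 : gm ^ (Nat.card ↥Mτ') ∈ Mτ ⊔ Mτ' := by
      refine (le_sup_left : Mτ ≤ Mτ ⊔ Mτ') ?_
      rw [hMτz, ← hdivt]
      exact mem_zpowers _
    have h2 : gm ^ (Nat.card ↥Mτ) ∈ Mτ ⊔ Mτ' := by
      refine (le_sup_right : Mτ' ≤ Mτ ⊔ Mτ') ?_
      rw [hMτ'z, ← hdivt']
      exact mem_zpowers _
    have h3 := pow_gcd_mem h1 h2
    have hgcd : Nat.gcd (Nat.card ↥Mτ') (Nat.card ↥Mτ) = 1 := by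
      rw [cMτ', cMτ]
      exact (hcoprime_prods γ γ).symm
    rwa [hgcd, pow_one] at h3
  have hMτcyc : IsCyclic ↥Mτ := by rw [hMτz]; exact zpowers_isCyclic _
  -- R1 : Mτ is a maximal cyclic subgroup of Hτ
  have hR1 : IsMaximalCyclicIn Hτ Mτ := by
    refine ⟨hMτcyc, hMτleHτ, ?_⟩
    intro Nsub hNcyc hNle hMτN
    obtain ⟨c, hcN, hcz⟩ := exists_zpowers_eq Nsub hNcyc
    set w' := gm ^ (orderOf gm / Nat.card ↥Mτ') with hw'def
    have hw'Mτ' : w' ∈ Mτ' := by rw [hMτ'z]; exact mem_zpowers _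
    have hcHτ : c ∈ Hτ := hNle hcN
    have hcw' : Commute c w' := hcommττ' c hcHτ w' (hMτ'leHτ' hw'Mτ')
    have hcop : (orderOf c).Coprime (orderOf w') := by
      have h1 : orderOf c ∣ ∏ i ∈ τ, p i ^ α i := by
        rw [← cHτ]; exact orderOf_dvd_card_subgroup hcHτ
      have h2 : orderOf w' ∣ ∏ i ∈ τ'', p i ^ α i := by
        have := orderOf_dvd_card_subgroup (hMτ'leHτ' hw'Mτ')
        rwa [cHτ'] at this
      exact ((hcoprime_prods α α).coprime_dvd_right h2).coprime_dvd_left h1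
    have hMD : M ≤ zpowers (c * w') := by
      rw [hMsup]
      refine sup_le ?_ ?_
      · exact le_trans hMτN (le_trans (le_of_eq hcz.symm)
          (zpowers_le.2 (mem_zpowers_mul_left hcw' hcop)))
      · exact le_trans (le_of_eq hMτ'z)
          (zpowers_le.2 (mem_zpowers_mul_right hcw' hcop))
    have hMeq : M = zpowers (c * w') := hM.2 _ (zpowers_isCyclic _) hMD
    have hNleM : Nsub ≤ M := by
      rw [← hcz, hMeq]
      exact zpowers_le.2 (mem_zpowers_mul_left hcw' hcop)
    have hNleMτ : Nsub ≤ Mτ := by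
      intro z hz
      have hzM : z ∈ zpowers gm := by rw [hgmz]; exact hNleM hz
      have hzo1 : orderOf z ∣ Nat.card ↥Hτ := orderOf_dvd_card_subgroup (hNle hz)
      have hzo2 : orderOf z ∣ orderOf gm := by
        rw [hordgm]; exact orderOf_dvd_card_subgroup (hNleM hz)
      have hzo3 : orderOf z ∣ Nat.card ↥Mτ := by
        have hg : orderOf z ∣ Nat.gcd (orderOf gm) (Nat.card ↥Hτ) := Nat.dvd_gcd hzo2 hzo1
        have hgcdeq : Nat.gcd (orderOf gm) (Nat.card ↥Hτ) = Nat.card ↥Mτ := by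
          rw [horder_split, cHτ, cMτ, cMτ']
          rw [Nat.Coprime.gcd_mul_right_cancel _ ((hcoprime_prods α γ).symm)]
          exact Nat.gcd_eq_left (Finset.prod_dvd_prod_of_dvd _ _
            fun i _ => pow_dvd_pow _ (hγ i).2)
        rw [← hgcdeq]; exact hg
      rw [hMτz]
      exact mem_zpowers_pow_of htdvd hzM hzo3
    exact le_antisymm hMτN hNleMτ
  -- counting all y with x ∈ ⟨y⟩
  have hAcount : Nat.card {y : G // x ∈ zpowers y}
      = Nat.card {y : G // y ∈ Hτ ∧ x ∈ zpowers y} * Nat.card ↥Hτ' := by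
    have hQ : ∀ h ∈ Hτ, ∀ k ∈ Hτ', (x ∈ zpowers (h * k) ↔ (x ∈ zpowers h) ∧ True) := by
      intro h hh k hk
      have hcm := hcommττ' h hh k hk
      have hcop : (orderOf h).Coprime (orderOf k) := by
        have h1 : orderOf h ∣ Nat.card ↥Hτ := orderOf_dvd_card_subgroup hh
        have h2 : orderOf k ∣ Nat.card ↥Hτ' := orderOf_dvd_card_subgroup hk
        exact (hcoHH.coprime_dvd_right h2).coprime_dvd_left h1
      constructor
      · intro hxhk
        obtain ⟨n, hn⟩ := exists_nat_pow_of_mem_zpowers hxhk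
        rw [hcm.mul_pow] at hn
        have hkn : k ^ n = 1 := by
          have h1 : k ^ n = (h ^ n)⁻¹ * x := by rw [← hn]; group
          have h2 : k ^ n ∈ Hτ := by
            rw [h1]; exact Hτ.mul_mem (Hτ.inv_mem (Hτ.pow_mem hh n)) hxHτ
          exact eq_one_of_mem_both hcoHH h2 (Hτ'.pow_mem hk n)
        refine ⟨?_, trivial⟩
        rw [← hn, hkn, mul_one]
        exact ⟨(n : ℤ), (zpow_natCast h n)⟩
      · rintro ⟨hxh, -⟩
        exact zpowers_le.2 (mem_zpowers_mul_left hcm hcop) hxh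
    have hcm := count_mul hcommττ' hcoHH (fun y => x ∈ zpowers y)
      (fun h => x ∈ zpowers h) (fun _ => True) hQ
    calc Nat.card {y : G // x ∈ zpowers y}
        = Nat.card {y : G // y ∈ Hτ ⊔ Hτ' ∧ x ∈ zpowers y} :=
          ncard_congr_iff fun y => by simp [htop]
      _ = _ := hcm
      _ = Nat.card {y : G // y ∈ Hτ ∧ x ∈ zpowers y} * Nat.card ↥Hτ' := by
          congr 1
          exact ncard_congr_iff fun y => by simp
  -- counting y ∈ Mτ with x ∈ ⟨y⟩
  have hMτcount : Nat.card {y : G // y ∈ Mτ ∧ x ∈ zpowers y}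
      = ∏ i ∈ τ, (p i ^ γ i - p i ^ (β i - 1)) := by
    have e1 : ∀ y, (y ∈ Mτ ∧ x ∈ zpowers y) ↔
        (y ∈ Mτ ∧ (∏ i ∈ τ, p i ^ β i) ∣ orderOf y) := by
      intro y
      refine and_congr_right fun hy => ?_
      rw [← hord]
      constructor
      · intro hxy
        have := card_dvd_of_le (zpowers_le.2 hxy)
        rwa [Nat.card_zpowers, Nat.card_zpowers] at this
      · intro hdvd
        exact mem_zpowers_of_orderOf_dvd (g := gm) hxgm (hMτlegm hy) hdvd
    rw [ncard_congr_iff e1, countMτ]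
    refine Finset.prod_congr rfl fun i hi => ?_
    obtain ⟨u, hu1, hu2⟩ := hMP i
    have hβ1 : 1 ≤ β i := (hβ i ((hmemτ i).1 hi)).1
    have hβγ : β i ≤ γ i := (hβ i ((hmemτ i).1 hi)).2
    have key : ∀ h : G, h ∈ M ⊓ P i →
        (¬ p i ^ β i ∣ orderOf h ↔ orderOf h ∣ p i ^ (β i - 1)) := by
      intro h hh
      have hho : orderOf h ∣ p i ^ γ i := by
        have := orderOf_dvd_card_subgroup hh
        rwa [hMPcard i] at this
      obtain ⟨c, hc, hcq⟩ := (Nat.dvd_prime_pow (hp i)).1 hho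
      rw [hcq, Nat.pow_dvd_pow_iff_le_right (hp i).one_lt,
        Nat.pow_dvd_pow_iff_le_right (hp i).one_lt]
      omega
    have hadd := ncard_and_add (fun h : G => h ∈ M ⊓ P i)
      (fun h : G => p i ^ β i ∣ orderOf h)
    have hneg : Nat.card {h : G // h ∈ M ⊓ P i ∧ ¬ p i ^ β i ∣ orderOf h}
        = p i ^ (β i - 1) := by
      have e2 : ∀ h : G, (h ∈ M ⊓ P i ∧ ¬ p i ^ β i ∣ orderOf h)
          ↔ (h ∈ zpowers u ∧ orderOf h ∣ p i ^ (β i - 1)) := by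
        intro h
        constructor
        · rintro ⟨hh, hnd⟩
          exact ⟨hu1 ▸ hh, (key h hh).1 hnd⟩
        · rintro ⟨hh', hd⟩
          have hh : h ∈ M ⊓ P i := hu1.symm ▸ hh'
          exact ⟨hh, (key h hh).2 hd⟩
      rw [ncard_congr_iff e2]
      exact ncard_orderOf_dvd u (by rw [hu2]; exact pow_dvd_pow _ (by omega))
    have htotal : Nat.card {h : G // h ∈ M ⊓ P i} = p i ^ γ i := by
      rw [ncard_mem, hMPcard i]
    omega
  set Aτn := Nat.card {y : G // y ∈ Hτ ∧ x ∈ zpowers y} with hAτdef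
  set Bτn := ∏ i ∈ τ, (p i ^ γ i - p i ^ (β i - 1)) with hBτdef
  have hBpos : 0 < Bτn := by
    rw [hBτdef]
    refine Finset.prod_pos fun i hi => ?_
    have hβ1 := (hβ i ((hmemτ i).1 hi)).1
    have hβγ := (hβ i ((hmemτ i).1 hi)).2
    have hlt : p i ^ (β i - 1) < p i ^ γ i :=
      Nat.pow_lt_pow_right (hp i).one_lt (by omega)
    omega
  have hc'pos : 0 < Nat.card ↥Hτ' := Nat.card_pos
  have hApos : 0 < Aτn := by
    rw [hAτdef]
    haveI : Nonempty {y : G // y ∈ Hτ ∧ x ∈ zpowers y} :=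
      ⟨⟨x, hMτleHτ hxMτ, mem_zpowers x⟩⟩
    exact Nat.card_pos
  have hUiff : Aτn = Bτn ↔ (∀ K : Subgroup G, IsMaximalCyclicIn Hτ K → x ∈ K → K = Mτ) := by
    constructor
    · intro hAB K hKmax hxK
      obtain ⟨y0, hy0K, hy0z⟩ := exists_zpowers_eq K hKmax.1
      by_cases hy0Mτ : y0 ∈ Mτ
      · have hKle : K ≤ Mτ := by rw [← hy0z]; exact zpowers_le.2 hy0Mτ
        exact hKmax.2.2 Mτ hMτcyc hMτleHτ hKle
      · exfalso
        have hsub : (univ.filter fun y : G => y ∈ Mτ ∧ x ∈ zpowers y)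
            ⊆ (univ.filter fun y : G => y ∈ Hτ ∧ x ∈ zpowers y) := by
          intro y hy
          simp only [mem_filter, mem_univ, true_and] at hy ⊢
          exact ⟨hMτleHτ hy.1, hy.2⟩
        have hy0A : y0 ∈ (univ.filter fun y : G => y ∈ Hτ ∧ x ∈ zpowers y) := by
          simp only [mem_filter, mem_univ, true_and]
          exact ⟨hKmax.2.1 hy0K, by rw [hy0z]; exact hxK⟩
        have hy0B : y0 ∉ (univ.filter fun y : G => y ∈ Mτ ∧ x ∈ zpowers y) := by
          simp only [mem_filter, mem_univ, true_and]
          exact fun h => hy0Mτ h.1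
        have hlt : (univ.filter fun y : G => y ∈ Mτ ∧ x ∈ zpowers y).card
            < (univ.filter fun y : G => y ∈ Hτ ∧ x ∈ zpowers y).card :=
          Finset.card_lt_card ⟨hsub, fun hsub' => hy0B (hsub' hy0A)⟩
        rw [← ncard_eq_filter_card, ← ncard_eq_filter_card] at hlt
        rw [hMτcount] at hlt
        rw [← hAτdef] at hlt
        omega
    · intro hU
      have heqset : ∀ y : G, (y ∈ Hτ ∧ x ∈ zpowers y) ↔ (y ∈ Mτ ∧ x ∈ zpowers y) := by
        intro y
        constructor
        · rintro ⟨hyH, hxy⟩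
          obtain ⟨K, hKmax, hyK⟩ := exists_isMaximalCyclicIn Hτ (zpowers y)
            (zpowers_isCyclic y) (zpowers_le.2 hyH)
          have hxK : x ∈ K := hyK hxy
          have hKMτ := hU K hKmax hxK
          exact ⟨hKMτ ▸ hyK (mem_zpowers y), hxy⟩
        · rintro ⟨hyM, hxy⟩
          exact ⟨hMτleHτ hyM, hxy⟩
      rw [hAτdef, hBτdef]
      rw [ncard_congr_iff heqset]
      rw [hMτcount, hBτdef]
  have hRHS : (IsMaximalCyclicIn Hτ Mτ ∧ x ∈ Mτ ∧
      (∀ K : Subgroup G, IsMaximalCyclicIn Hτ K → x ∈ K → K = Mτ)) ↔ (Aτn = Bτn) :=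
    ⟨fun h => hUiff.2 h.2.2, fun h => ⟨hR1, hxMτ, hUiff.1 h⟩⟩
  rw [hRHS]
  have hdeg := degree_eq (G := G) x
  rw [hAcount] at hdeg
  rw [show (∏ j ∈ τ'', p j ^ α j) = Nat.card ↥Hτ' by rw [cHτ']]
  have htot : (orderOf x).totient ≤ orderOf x := Nat.totient_le _
  have hAc1 : 1 ≤ Aτn * Nat.card ↥Hτ' := Nat.one_le_iff_ne_zero.2
    (Nat.mul_ne_zero hApos.ne' hc'pos.ne')
  have hBc1 : 1 ≤ Nat.card ↥Hτ' * Bτn := Nat.one_le_iff_ne_zero.2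
    (Nat.mul_ne_zero hc'pos.ne' hBpos.ne')
  constructor
  · intro hdegeq
    have h1 : Aτn * Nat.card ↥Hτ' = Nat.card ↥Hτ' * Bτn := by
      set A2 := Aτn * Nat.card ↥Hτ' with hA2
      set B2 := Nat.card ↥Hτ' * Bτn with hB2
      omega
    have h2 : Aτn * Nat.card ↥Hτ' = Bτn * Nat.card ↥Hτ' := h1.trans (mul_comm _ _)
    exact Nat.eq_of_mul_eq_mul_right hc'pos h2
  · intro hAB
    rw [hAB] at hdeg
    have h3 : Bτn * Nat.card ↥Hτ' = Nat.card ↥Hτ' * Bτn := mul_comm _ _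
    rw [h3] at hdeg
    set B2 := Nat.card ↥Hτ' * Bτn with hB2
    omega
end
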